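/- arXiv:2306.05130 — 4 statements merged into one kernel-verified Lean document; each statement's English description precedes it below -/
import Mathlib

section
/- Let H be a compact Hausdorff abelian topological group and let (Γ_α)_{α∈I} be a net of closed subgroups of H indexed by a directed set I that is increasing, i.e. Γ_α ⊆ Γ_β whenever α ≤ β. Let μ_α denote the Haar probability measure on Γ_α, viewed as a Borel probability measure on H. Then the net (μ_α) converges weakly to the Haar probability measure on the closed subgroup Γ given by the closure of the union of the Γ_α. -/
open MeasureTheory

/-- `μ` is the Haar probability measure of the (compact) subgroup of `H` with carrier `S`,
viewed as a Borel probability measure on `H`: it is a probability measure supported on `S`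
and invariant under translation by every element of `S`. -/
def IsHaarOnSubgroup {H : Type} [CommGroup H] [TopologicalSpace H] [MeasurableSpace H]
    (S : Set H) (μ : Measure H) : Prop :=
  IsProbabilityMeasure μ ∧ μ S = 1 ∧
    ∀ g ∈ S, Measure.map (fun x => g * x) μ = μ

section AuxHaar
open Pointwise

variable {H : Type} [CommGroup H] [TopologicalSpace H] [IsTopologicalGroup H]
    [CompactSpace H] [T2Space H] [MeasurableSpace H] [BorelSpace H]

set_option linter.unusedSectionVars false

lemma cont_integrable (μ : Measure H) [IsFiniteMeasure μ] {f : H → ℝ} (hf : Continuous f) :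
    Integrable f μ :=
  hf.integrable_of_hasCompactSupport (HasCompactSupport.of_compactSpace f)

lemma exists_haar_on_closed (K : Subgroup H) (hK : IsClosed (K : Set H)) :
    ∃ ν : Measure H, IsProbabilityMeasure ν ∧ ν (K : Set H) = 1 ∧
      ∀ g ∈ (K : Set H), Measure.map (fun x => g * x) ν = ν := by
  haveI : CompactSpace K := isCompact_iff_compactSpace.mp (hK.isCompact)
  haveI : Nonempty K := ⟨⟨1, K.one_mem⟩⟩
  haveI : BorelSpace K := Subtype.borelSpace (K : Set H)
  let K₀ : TopologicalSpace.PositiveCompacts K :=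
    ⟨⟨Set.univ, isCompact_univ⟩, by simp [interior_univ]⟩
  let μK : Measure K := Measure.haarMeasure K₀
  have hμK1 : μK Set.univ = 1 := by
    have := Measure.haarMeasure_self (K₀ := K₀)
    simpa [K₀] using this
  haveI : IsProbabilityMeasure μK := ⟨hμK1⟩
  refine ⟨Measure.map (Subtype.val) μK, ?_, ?_, ?_⟩
  · exact Measure.isProbabilityMeasure_map continuous_subtype_val.measurable.aemeasurable
  · rw [Measure.map_apply continuous_subtype_val.measurable hK.measurableSet]
    have : (Subtype.val : K → H) ⁻¹' (K : Set H) = Set.univ := by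
      ext x; simpa using x.2
    rw [this, hμK1]
  · intro g hg
    have hmg : Measurable (fun x : H => g * x) := (continuous_mul_left g).measurable
    rw [Measure.map_map hmg continuous_subtype_val.measurable]
    have : (fun x : H => g * x) ∘ (Subtype.val : K → H)
        = (Subtype.val : K → H) ∘ (fun x : K => (⟨g, hg⟩ : K) * x) := rfl
    rw [this, ← Measure.map_map continuous_subtype_val.measurable
      (continuous_mul_left (⟨g, hg⟩ : K)).measurable,
      MeasureTheory.map_mul_left_eq_self μK ⟨g, hg⟩]

lemma unif_cont {f : H → ℝ} (hf : Continuous f) {ε : ℝ} (hε : 0 < ε) :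
    ∃ U : Set H, IsOpen U ∧ (1:H) ∈ U ∧ ∀ x u, u ∈ U → |f (x * u) - f x| ≤ ε := by
  letI : UniformSpace H := IsTopologicalGroup.rightUniformSpace H
  haveI : IsUniformGroup H := isUniformGroup_of_commGroup
  have huc : UniformContinuous f := CompactSpace.uniformContinuous_of_continuous hf
  have hmem : {p : ℝ × ℝ | dist p.1 p.2 < ε} ∈ uniformity ℝ := Metric.dist_mem_uniformity hε
  have h2 : (fun p : H × H => (f p.1, f p.2)) ⁻¹' {p : ℝ × ℝ | dist p.1 p.2 < ε}
      ∈ uniformity H := huc hmem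
  rw [uniformity_eq_comap_nhds_one' H, Filter.mem_comap] at h2
  obtain ⟨V, hV, hVsub⟩ := h2
  obtain ⟨U, hUV, hUopen, hU1⟩ := mem_nhds_iff.mp hV
  refine ⟨U, hUopen, hU1, fun x u hu => ?_⟩
  have hp : ((x, x * u) : H × H) ∈ (fun p : H × H => p.2 * p.1⁻¹) ⁻¹' V := by
    simpa [div_eq_mul_inv, mul_comm, mul_assoc] using hUV hu
  have := hVsub hp
  simp only [Set.mem_preimage, Set.mem_setOf_eq, Real.dist_eq] at this
  rw [abs_sub_comm] at this
  exact le_of_lt this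

variable {I : Type} [Preorder I] [Nonempty I] [IsDirected I (· ≤ ·)]

lemma cover_lemma (Γ : I → Subgroup H) (hmono : Monotone Γ)
    {U : Set H} (hUopen : IsOpen U) (hU1 : (1:H) ∈ U) :
    ∃ α₀ : I, ∀ α, α₀ ≤ α → closure (⋃ β, (Γ β : Set H)) ⊆ (Γ α : Set H) * U := by
  set S := closure (⋃ β, (Γ β : Set H)) with hS
  have hcover : S ⊆ ⋃ β, (Γ β : Set H) * U := by
    intro x hx
    have hO : IsOpen {z : H | z⁻¹ * x ∈ U} := hUopen.preimage (by continuity)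
    have hxO : x ∈ {z : H | z⁻¹ * x ∈ U} := by simp [hU1]
    obtain ⟨y, hyO, hymem⟩ := _root_.mem_closure_iff.mp hx _ hO hxO
    obtain ⟨β, hyβ⟩ := Set.mem_iUnion.mp hymem
    exact Set.mem_iUnion.mpr ⟨β, y, hyβ, y⁻¹ * x, hyO, by group⟩
  obtain ⟨t, ht⟩ := (isClosed_closure.isCompact).elim_finite_subcover
    (fun β => (Γ β : Set H) * U) (fun β => hUopen.mul_left) hcover
  obtain ⟨α₀, hα₀⟩ := t.exists_le
  refine ⟨α₀, fun α hα x hx => ?_⟩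
  obtain ⟨β, hβt, hxβ⟩ := Set.mem_iUnion₂.mp (ht hx)
  exact Set.mul_subset_mul_right (hmono ((hα₀ β hβt).trans hα)) hxβ

end AuxHaar

/-- For an increasing net of closed subgroups of a compact Hausdorff abelian
group, the Haar probability measures converge weakly to the Haar probability measure on the
closure of the union. -/
theorem haar_measures_of_increasing_net_converge
    {H : Type} [CommGroup H] [TopologicalSpace H] [IsTopologicalGroup H]
    [CompactSpace H] [T2Space H] [MeasurableSpace H] [BorelSpace H]
    {I : Type} [Preorder I] [Nonempty I] [IsDirected I (· ≤ ·)]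
    (Γ : I → Subgroup H) (hmono : Monotone Γ)
    (hclosed : ∀ α, IsClosed (Γ α : Set H))
    (μ : I → Measure H) (hμ : ∀ α, IsHaarOnSubgroup (Γ α : Set H) (μ α)) :
    (∃ ν, IsHaarOnSubgroup (closure (⋃ α, (Γ α : Set H))) ν) ∧
    ∀ ν, IsHaarOnSubgroup (closure (⋃ α, (Γ α : Set H))) ν →
      ∀ f : H → ℝ, Continuous f →
        Filter.Tendsto (fun α => ∫ x, f x ∂(μ α)) Filter.atTop (nhds (∫ x, f x ∂ν)) := by
  constructor
  · obtain ⟨ν, h1, h2, h3⟩ := exists_haar_on_closed ((⨆ α, Γ α).topologicalClosure)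
      (Subgroup.isClosed_topologicalClosure _)
    have hcoe : ((⨆ α, Γ α).topologicalClosure : Set H) = closure (⋃ α, (Γ α : Set H)) := by
      rw [Subgroup.topologicalClosure_coe, Subgroup.coe_iSup_of_directed hmono.directed_le]
    rw [hcoe] at h2 h3
    exact ⟨ν, h1, h2, h3⟩
  · intro ν hν f hf
    set S := closure (⋃ α, (Γ α : Set H)) with hSdef
    haveI : IsProbabilityMeasure ν := hν.1
    set c := ∫ x, f x ∂ν with hc
    have key : ∀ ε : ℝ, 0 < ε → ∃ α₀ : I, ∀ α, α₀ ≤ α →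
        |(∫ x, f x ∂(μ α)) - c| ≤ ε := by
      intro ε hε
      obtain ⟨U, hUopen, hU1, hUf⟩ := unif_cont hf hε
      obtain ⟨α₀, hα₀⟩ := cover_lemma Γ hmono hUopen hU1
      refine ⟨α₀, fun α hα => ?_⟩
      haveI : IsProbabilityMeasure (μ α) := (hμ α).1
      set d := ∫ x, f x ∂(μ α) with hd
      have hswap : ∫ g, (∫ x, (f (g * x) - f g) ∂ν) ∂(μ α)
          = ∫ x, (∫ g, (f (g * x) - f g) ∂(μ α)) ∂ν := by
        apply integral_integral_swap_of_hasCompactSupport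
        · exact (hf.comp (continuous_fst.mul continuous_snd)).sub (hf.comp continuous_fst)
        · exact HasCompactSupport.of_compactSpace _
      -- left side equals c - d
      have hmemμ : ∀ᵐ g ∂(μ α), g ∈ (Γ α : Set H) := by
        rw [MeasureTheory.ae_iff]
        have : (μ α) ((Γ α : Set H))ᶜ = 0 := by
          rw [measure_compl (hclosed α).measurableSet (measure_ne_top _ _), (hμ α).2.1]
          simp
        simpa [Set.compl_def] using this
      have hL : ∫ g, (∫ x, (f (g * x) - f g) ∂ν) ∂(μ α) = c - d := by
        have hptw : ∀ g ∈ (Γ α : Set H), (∫ x, (f (g * x) - f g) ∂ν) = c - f g := by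
          intro g hg
          have hinv := hν.2.2 g (subset_closure (Set.mem_iUnion.mpr ⟨α, hg⟩))
          have h1 : ∫ x, f (g * x) ∂ν = c := by
            conv_rhs => rw [hc, ← hinv]
            rw [integral_map (continuous_mul_left g).measurable.aemeasurable
              hf.aestronglyMeasurable]
          have hi1 : Integrable (fun x => f (g * x)) ν :=
            cont_integrable ν (hf.comp (continuous_mul_left g))
          rw [integral_sub hi1 (integrable_const _), h1, integral_const]
          simp
        calc ∫ g, (∫ x, (f (g * x) - f g) ∂ν) ∂(μ α)
            = ∫ g, (c - f g) ∂(μ α) :=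
              integral_congr_ae (hmemμ.mono fun g hg => hptw g hg)
          _ = c - d := by
              rw [integral_sub (integrable_const _) (cont_integrable _ hf), integral_const]
              simp [hd]
      -- pointwise bound on the right side
      have hmemν : ∀ᵐ x ∂ν, x ∈ S := by
        rw [MeasureTheory.ae_iff]
        have : ν Sᶜ = 0 := by
          rw [measure_compl isClosed_closure.measurableSet (measure_ne_top _ _), hν.2.1]
          simp
        simpa [Set.compl_def] using this
      have hbound : ∀ᵐ x ∂ν, ‖∫ g, (f (g * x) - f g) ∂(μ α)‖ ≤ ε := by
        filter_upwards [hmemν] with x hx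
        obtain ⟨h, hh, u, hu, hhu⟩ := hα₀ α hα hx
        have hinv := (hμ α).2.2 h hh
        have h1 : ∫ g, f (g * u) ∂(μ α) = ∫ g, f (g * x) ∂(μ α) := by
          conv_lhs => rw [← hinv]
          rw [integral_map (continuous_mul_left h).measurable.aemeasurable
            (show AEStronglyMeasurable (fun y => f (y * u))
              (Measure.map (fun x => h * x) (μ α)) from
              (hf.comp (continuous_mul_right u)).aestronglyMeasurable)]
          congr 1
          funext g
          congr 1
          rw [← hhu, mul_comm h g, mul_assoc]
        have h2 : ∫ g, (f (g * x) - f g) ∂(μ α) = ∫ g, (f (g * u) - f g) ∂(μ α) := by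
          have hix : Integrable (fun g => f (g * x)) (μ α) :=
            cont_integrable _ (hf.comp (continuous_mul_right x))
          have hiu : Integrable (fun g => f (g * u)) (μ α) :=
            cont_integrable _ (hf.comp (continuous_mul_right u))
          rw [integral_sub hix (cont_integrable _ hf),
            integral_sub hiu (cont_integrable _ hf), h1]
        rw [h2]
        calc ‖∫ g, (f (g * u) - f g) ∂(μ α)‖
            ≤ ε * ((μ α) Set.univ).toReal :=
              norm_integral_le_of_norm_le_const (Filter.Eventually.of_forall fun g => by
                simpa [Real.norm_eq_abs] using hUf g u hu)
          _ = ε := by simp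
      have hfinal : ‖c - d‖ ≤ ε := by
        rw [← hL, hswap]
        calc ‖∫ x, (∫ g, (f (g * x) - f g) ∂(μ α)) ∂ν‖
            ≤ ε * (ν Set.univ).toReal := norm_integral_le_of_norm_le_const hbound
          _ = ε := by simp
      rw [Real.norm_eq_abs, abs_sub_comm] at hfinal
      exact hfinal
    rw [Metric.tendsto_nhds]
    intro ε hε
    obtain ⟨α₀, hα₀⟩ := key (ε / 2) (by positivity)
    rw [Filter.eventually_atTop]
    refine ⟨α₀, fun α hα => ?_⟩
    have := hα₀ α hα
    rw [Real.dist_eq]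
    linarith
end

section
/- Let G=(V,E) be a finite graph, let p ∈ (0,1), and set x = p/(2−p). For a configuration ω, let UEG_ω denote the uniform probability measure on the even configurations η with η ≤ ω pointwise (the even subgraphs of the open graph of ω). Then sampling ω according to the free random-cluster measure φ^0_{p,G} and then sampling η according to UEG_ω produces a sample of the loop O(1) measure: for every even configuration η, Σ_ω φ^0_{p,G}[ω]·UEG_ω[η] = ℓ^0_{x,G}[η]. -/
open MeasureTheory

noncomputable section
set_option linter.unusedSectionVars false
set_option maxHeartbeats 1000000

attribute [local instance] Classical.propDecidable

/-- The source (mod-2 boundary) of a configuration on a set `E` of edges, at a vertex `v`. -/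
def srcAt {V : Type*} {E : Set (Sym2 V)} (ω : E → ZMod 2) (v : V) : ZMod 2 :=
  (Set.ncard {e : E | ω e = 1 ∧ v ∈ (e : Sym2 V)} : ZMod 2)

/-- A configuration is even (sourceless). -/
def IsEvenConf {V : Type*} {E : Set (Sym2 V)} (ω : E → ZMod 2) : Prop :=
  ∀ v : V, srcAt ω v = 0

section
variable {V : Type} [Fintype V] [DecidableEq V] (G : SimpleGraph V) [Fintype G.edgeSet]

/-- The number of open edges of a configuration. -/
def openCount (ω : G.edgeSet → ZMod 2) : ℕ :=
  (Finset.univ.filter fun e : G.edgeSet => ω e = 1).card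

/-- The number `κ^ξ(ω)` of classes of the smallest equivalence relation containing the
boundary condition `ξ` and relating the endpoints of every open edge of `ω`. -/
def clusterCount (ξ : V → V → Prop) (ω : G.edgeSet → ZMod 2) : ℕ :=
  Nat.card (Quot (fun a b : V =>
    ξ a b ∨ ∃ h : G.Adj a b, ω ⟨s(a, b), (G.mem_edgeSet).mpr h⟩ = 1))

/-- The random-cluster weight of a configuration. -/
def rcWeight (p : ℝ) (ξ : V → V → Prop) (ω : G.edgeSet → ZMod 2) : ℝ :=
  p ^ openCount G ω * (1 - p) ^ (Fintype.card G.edgeSet - openCount G ω) *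
    2 ^ clusterCount G ξ ω

/-- The random-cluster measure `φ^ξ_{p,G}` as a probability mass function. -/
def rcPMF (p : ℝ) (ξ : V → V → Prop) (ω : G.edgeSet → ZMod 2) : ℝ :=
  rcWeight G p ξ ω / ∑ ω' : G.edgeSet → ZMod 2, rcWeight G p ξ ω'

/-- The loop O(1) measure `ℓ^0_{x,G}` as a probability mass function. -/
def loopPMF (x : ℝ) (η : G.edgeSet → ZMod 2) : ℝ :=
  (if IsEvenConf η then x ^ openCount G η else 0) /
    ∑ η' : G.edgeSet → ZMod 2, if IsEvenConf η' then x ^ openCount G η' else 0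

/-- Bernoulli(p) bond percolation as a probability mass function. -/
def berPMF (p : ℝ) (ζ : G.edgeSet → ZMod 2) : ℝ :=
  p ^ openCount G ζ * (1 - p) ^ (Fintype.card G.edgeSet - openCount G ζ)

/-- The union (pointwise maximum) of two configurations. -/
def unionConf (η ζ : G.edgeSet → ZMod 2) : G.edgeSet → ZMod 2 :=
  fun e => if η e = 1 ∨ ζ e = 1 then 1 else 0

/-- The uniform measure on even subgraphs of (the open graph of) `ω`, evaluated at `η`. -/
def uegCondPMF (ω η : G.edgeSet → ZMod 2) : ℝ :=
  if IsEvenConf η ∧ (∀ e, η e = 1 → ω e = 1) then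
    ((Set.ncard {σ : G.edgeSet → ZMod 2 | IsEvenConf σ ∧ ∀ e, σ e = 1 → ω e = 1} : ℝ))⁻¹
  else 0


end

namespace RCUEG

lemma z2cases (a : ZMod 2) : a = 0 ∨ a = 1 := by revert a; decide
lemma z2add (a : ZMod 2) : a + a = 0 := by revert a; decide
lemma z2ne1 {a : ZMod 2} (h : a ≠ 1) : a = 0 := by revert h; revert a; decide
lemma z2ne0 {a : ZMod 2} (h : a ≠ 0) : a = 1 := by revert h; revert a; decide

variable {V : Type} [Fintype V] [DecidableEq V] {E : Set (Sym2 V)} [Fintype E]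

lemma srcAt_eq_sum (σ : E → ZMod 2) (v : V) :
    srcAt σ v = ∑ e : E, σ e * (if v ∈ (e : Sym2 V) then 1 else 0) := by
  rw [srcAt, Set.ncard_eq_toFinset_card', Set.toFinset_setOf, Finset.card_filter]
  push_cast
  refine Finset.sum_congr rfl fun e _ => ?_
  rcases z2cases (σ e) with h | h <;> simp [h]

variable (E) in
/-- The map sending a configuration on the edges open in `ω` to its mod-2 source function. -/
def Tmap (ω : E → ZMod 2) : ({e : E // ω e = 1} → ZMod 2) →+ (V → ZMod 2) where
  toFun σ := fun v => ∑ a : {e : E // ω e = 1}, σ a * (if v ∈ ((a : E) : Sym2 V) then 1 else 0)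
  map_zero' := by funext v; simp
  map_add' σ τ := by
    funext v
    dsimp only [Pi.add_apply]
    rw [← Finset.sum_add_distrib]
    exact Finset.sum_congr rfl fun a _ => add_mul _ _ _

/-- Summing a function on vertices over the classes of a relation `r`. -/
def Smap (r : V → V → Prop) : (V → ZMod 2) →+ (Quot r → ZMod 2) where
  toFun f := fun c => ∑ v ∈ Finset.univ.filter (fun v => Quot.mk r v = c), f v
  map_zero' := by funext c; simp
  map_add' f g := by funext c; simp [Finset.sum_add_distrib]

/-- restriction/extension equivalence between `ker (Tmap E ω)` and even subconfigurations. -/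
def kerEquiv (ω : E → ZMod 2) :
    (Tmap E ω).ker ≃ {σ : E → ZMod 2 | IsEvenConf σ ∧ ∀ e, σ e = 1 → ω e = 1} where
  toFun x := ⟨fun e => if h : ω e = 1 then x.1 ⟨e, h⟩ else 0, by
    constructor
    · intro v
      rw [srcAt_eq_sum]
      have h0 : ∀ e : E, ¬ (ω e = 1) →
          (if h : ω e = 1 then x.1 ⟨e, h⟩ else 0) * (if v ∈ (e : Sym2 V) then 1 else 0) = 0 := by
        intro e he; rw [dif_neg he, zero_mul]
      rw [← Finset.sum_filter_add_sum_filter_not Finset.univ (fun e => ω e = 1)]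
      rw [Finset.sum_subtype (p := fun e => ω e = 1) (Finset.univ.filter (fun e => ω e = 1))
        (by simp) (fun e => (if h : ω e = 1 then x.1 ⟨e, h⟩ else 0) * (if v ∈ (e : Sym2 V) then 1 else 0))]
      have h2 : ∀ a : {e : E // ω e = 1},
          (if h : ω (a:E) = 1 then x.1 ⟨a, h⟩ else 0) * (if v ∈ ((a:E) : Sym2 V) then 1 else 0)
          = x.1 a * (if v ∈ ((a:E) : Sym2 V) then 1 else 0) := by
        intro a; rw [dif_pos a.2]
      rw [Finset.sum_congr rfl (fun a _ => h2 a)]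
      have h3 := congrFun x.2 v
      simp only [Tmap, AddMonoidHom.coe_mk, ZeroHom.coe_mk] at h3
      rw [h3, Finset.sum_eq_zero (fun e he => h0 e (by simpa using Finset.mem_filter.mp he |>.2)),
        add_zero]
      rfl
    · intro e he
      by_contra hω
      have he' : (if h : ω e = 1 then x.1 ⟨e, h⟩ else 0) = 1 := he
      rw [dif_neg hω] at he'
      exact (by decide : (0 : ZMod 2) ≠ 1) he'⟩
  invFun s := ⟨fun a => s.1 a.1, by
    have hs := s.2
    ext v
    have h3 : (Tmap E ω) (fun a => s.1 a.1) v =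
        ∑ a : {e : E // ω e = 1}, s.1 a.1 * (if v ∈ ((a:E) : Sym2 V) then 1 else 0) := rfl
    rw [h3]
    have h4 : ∑ a : {e : E // ω e = 1}, s.1 a.1 * (if v ∈ ((a:E) : Sym2 V) then 1 else 0)
        = ∑ e : E, s.1 e * (if v ∈ (e : Sym2 V) then 1 else 0) := by
      rw [← Finset.sum_subtype (p := fun e => ω e = 1) (Finset.univ.filter (fun e => ω e = 1)) (by simp)
        (fun e => s.1 e * (if v ∈ (e : Sym2 V) then 1 else 0))]
      rw [← Finset.sum_filter_add_sum_filter_not Finset.univ (fun e => ω e = 1)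
        (fun e => s.1 e * (if v ∈ (e : Sym2 V) then 1 else 0))]
      rw [Finset.sum_eq_zero (s := Finset.univ.filter (fun e => ¬ ω e = 1)), add_zero]
      intro e he
      have : s.1 e = 0 := by
        by_contra h
        exact (Finset.mem_filter.mp he).2 (hs.2 e (z2ne0 h))
      rw [this, zero_mul]
    rw [h4, ← srcAt_eq_sum]
    exact hs.1 v
    ⟩
  left_inv x := by
    apply Subtype.ext
    funext a
    simp [dif_pos a.2]
  right_inv s := by
    apply Subtype.ext
    funext e
    by_cases h : ω e = 1
    · simp [dif_pos h]
    · simp only [dif_neg h]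
      by_contra h2
      exact h (s.2.2 e (z2ne0 (fun hh => h2 hh.symm)))


/-- indicator of a single vertex -/
def sgl (u : V) : V → ZMod 2 := Pi.single u 1

lemma sgl_apply (u v : V) : sgl u v = if v = u then 1 else 0 := Pi.single_apply u 1 v

lemma Tmap_apply (ω : E → ZMod 2) (σ : {e : E // ω e = 1} → ZMod 2) (v : V) :
    Tmap E ω σ v = ∑ a : {e : E // ω e = 1}, σ a * (if v ∈ ((a : E) : Sym2 V) then 1 else 0) :=
  rfl

lemma Smap_apply (r : V → V → Prop) (f : V → ZMod 2) (c : Quot r) :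
    Smap r f c = ∑ v ∈ Finset.univ.filter (fun v => Quot.mk r v = c), f v := rfl

end RCUEG

namespace RCUEG2
open RCUEG

variable {V : Type} [Fintype V] [DecidableEq V] (G : SimpleGraph V) [Fintype G.edgeSet]

/-- The relation whose equivalence closure gives the clusters (free boundary conditions). -/
def rel (ω : G.edgeSet → ZMod 2) : V → V → Prop :=
  fun a b => Eq a b ∨ ∃ h : G.Adj a b, ω ⟨s(a, b), (G.mem_edgeSet).mpr h⟩ = 1

lemma edge_repr (e : G.edgeSet) : ∃ u w, ∃ _ : G.Adj u w, (e : Sym2 V) = s(u, w) := by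
  obtain ⟨e, he⟩ := e
  induction e with
  | _ u w => exact ⟨u, w, (G.mem_edgeSet).mp he, rfl⟩

variable {G}

lemma range_le_ker (ω : G.edgeSet → ZMod 2) (σ : {e : G.edgeSet // ω e = 1} → ZMod 2) :
    Smap (rel G ω) ((Tmap G.edgeSet ω) σ) = 0 := by
  funext c
  rw [Smap_apply]
  rw [Finset.sum_congr rfl (fun v _ => Tmap_apply ω σ v)]
  rw [Finset.sum_comm]
  refine Finset.sum_eq_zero fun a _ => ?_
  rw [← Finset.mul_sum]
  obtain ⟨u, w, hadj, he⟩ := edge_repr G (a : G.edgeSet)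
  have hne : u ≠ w := hadj.ne
  have hω : ω ⟨s(u, w), (G.mem_edgeSet).mpr hadj⟩ = 1 := by
    have : (⟨s(u, w), (G.mem_edgeSet).mpr hadj⟩ : G.edgeSet) = (a : G.edgeSet) :=
      Subtype.ext he.symm
    rw [this]; exact a.2
  have hmk : Quot.mk (rel G ω) u = Quot.mk (rel G ω) w :=
    Quot.sound (Or.inr ⟨hadj, hω⟩)
  have hsum : (∑ v ∈ Finset.univ.filter (fun v => Quot.mk (rel G ω) v = c),
      (if v ∈ ((a : G.edgeSet) : Sym2 V) then (1 : ZMod 2) else 0)) = 0 := by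
    rw [Finset.sum_filter]
    have hsub : ∀ v ∈ Finset.univ, v ∉ ({u, w} : Finset V) →
        (if Quot.mk (rel G ω) v = c then
          (if v ∈ ((a : G.edgeSet) : Sym2 V) then (1 : ZMod 2) else 0) else 0) = 0 := by
      intro v _ hv
      simp only [Finset.mem_insert, Finset.mem_singleton, not_or] at hv
      rw [he]
      rw [if_neg (show ¬(v ∈ s(u, w)) from by
        rw [Sym2.mem_iff]; tauto), ite_self]
    rw [← Finset.sum_subset (Finset.subset_univ ({u, w} : Finset V)) hsub,
      Finset.sum_pair hne, he]
    simp only [Sym2.mem_iff, true_or, or_true, if_true, hmk]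
    split <;> decide
  rw [hsum, mul_zero]

lemma single_mem_range (ω : G.edgeSet → ZMod 2) {u w : V}
    (h : Relation.EqvGen (rel G ω) u w) :
    sgl u + sgl w ∈ (Tmap G.edgeSet ω).range := by
  have hself : ∀ a : V, sgl a + sgl a = (0 : V → ZMod 2) := fun a => by
    funext v; exact z2add _
  induction h with
  | rel a b hab =>
    rcases hab with rfl | ⟨hadj, hω⟩
    · rw [hself]; exact zero_mem _
    · have hne : a ≠ b := hadj.ne
      refine ⟨Pi.single ⟨⟨s(a, b), (G.mem_edgeSet).mpr hadj⟩, hω⟩ (1 : ZMod 2), ?_⟩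
      funext v
      rw [Tmap_apply]
      rw [Finset.sum_eq_single (⟨⟨s(a, b), (G.mem_edgeSet).mpr hadj⟩, hω⟩ :
          {e : G.edgeSet // ω e = 1})]
      · simp only [Pi.single_eq_same, one_mul, Pi.add_apply]
        show (if v ∈ s(a, b) then (1 : ZMod 2) else 0) = sgl a v + sgl b v
        simp only [Sym2.mem_iff, sgl_apply]
        rcases eq_or_ne v a with rfl | hva
        · rw [if_pos (Or.inl rfl), if_pos rfl, if_neg hne, add_zero]
        · rcases eq_or_ne v b with rfl | hvb
          · rw [if_pos (Or.inr rfl), if_neg hva, if_pos rfl, zero_add]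
          · rw [if_neg (by tauto), if_neg hva, if_neg hvb, add_zero]
      · intro x _ hx
        rw [Pi.single_eq_of_ne hx, zero_mul]
      · intro hmem; exact absurd (Finset.mem_univ _) hmem
  | refl a => rw [hself]; exact zero_mem _
  | symm a b _ ih => rwa [add_comm]
  | trans a b c _ _ ih1 ih2 =>
    have hmem := add_mem ih1 ih2
    have heq : (sgl a + sgl b) + (sgl b + sgl c) = sgl a + sgl c := by
      funext v
      have hz : ∀ x y z : ZMod 2, (x + y) + (y + z) = x + z := by decide
      exact hz _ _ _
    rwa [heq] at hmem


lemma smap_ker_zero (ω : G.edgeSet → ZMod 2) {f : V → ZMod 2}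
    (hf : f ∈ (Tmap G.edgeSet ω).range) : Smap (rel G ω) f = 0 := by
  obtain ⟨σ, rfl⟩ := hf
  exact range_le_ker ω σ

lemma ker_le_range (ω : G.edgeSet → ZMod 2) (f : V → ZMod 2)
    (hf : Smap (rel G ω) f = 0) : f ∈ (Tmap G.edgeSet ω).range := by
  suffices h : ∀ n (f : V → ZMod 2), (Finset.univ.filter (fun v => f v ≠ 0)).card ≤ n →
      Smap (rel G ω) f = 0 → f ∈ (Tmap G.edgeSet ω).range from
    h _ f le_rfl hf
  intro n
  induction n with
  | zero =>
    intro f hcard hf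
    have hf0 : f = 0 := by
      funext v
      by_contra h
      have hv : v ∈ Finset.univ.filter (fun v => f v ≠ 0) := by
        simp only [Finset.mem_filter, Finset.mem_univ, true_and]; exact h
      have := Finset.card_eq_zero.mp (Nat.le_zero.mp hcard)
      rw [this] at hv
      exact absurd hv (Finset.notMem_empty v)
    rw [hf0]; exact zero_mem _
  | succ n ih =>
    intro f hcard hf
    by_cases h0 : f = 0
    · rw [h0]; exact zero_mem _
    · obtain ⟨u, hu⟩ : ∃ u, f u ≠ 0 := by
        by_contra hcon
        push_neg at hcon
        exact h0 (funext fun v => hcon v)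
      have hu1 : f u = 1 := z2ne0 hu
      have hsum : (∑ v ∈ Finset.univ.filter
          (fun v => Quot.mk (rel G ω) v = Quot.mk (rel G ω) u), f v) = 0 := by
        have h := congrFun hf (Quot.mk (rel G ω) u)
        rwa [Smap_apply] at h
      have hw : ∃ w, Quot.mk (rel G ω) w = Quot.mk (rel G ω) u ∧ w ≠ u ∧ f w = 1 := by
        by_contra hcon
        push_neg at hcon
        have hone : (∑ v ∈ Finset.univ.filter
            (fun v => Quot.mk (rel G ω) v = Quot.mk (rel G ω) u), f v) = f u := by
          refine Finset.sum_eq_single u (fun b hb hbne => ?_) (fun hnm => absurd ?_ hnm)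
          · have hbc := (Finset.mem_filter.mp hb).2
            exact z2ne1 (fun h1 => hcon b hbc hbne h1)
          · exact Finset.mem_filter.mpr ⟨Finset.mem_univ _, rfl⟩
        rw [hone, hu1] at hsum
        exact one_ne_zero hsum
      obtain ⟨w, hwc, hwu, hw1⟩ := hw
      have heqv : Relation.EqvGen (rel G ω) u w := Quot.eq.mp hwc.symm
      have hδ : sgl u + sgl w ∈ (Tmap G.edgeSet ω).range := single_mem_range ω heqv
      set g : V → ZMod 2 := f + (sgl u + sgl w) with hg
      have hgval : ∀ v, g v = f v + (sgl u v + sgl w v) := fun v => rfl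
      have hgker : Smap (rel G ω) g = 0 := by
        rw [hg, map_add, hf, smap_ker_zero ω hδ, add_zero]
      have hsub : Finset.univ.filter (fun v => g v ≠ 0) ⊆
          (Finset.univ.filter (fun v => f v ≠ 0)).erase u := by
        intro v hv
        simp only [Finset.mem_filter, Finset.mem_univ, true_and] at hv
        rcases eq_or_ne v u with rfl | hvu
        · exfalso
          apply hv
          rw [hgval, hu1, sgl_apply, sgl_apply, if_pos rfl, if_neg (fun h => hwu h.symm)]
          decide
        · rcases eq_or_ne v w with rfl | hvw
          · exfalso
            apply hv
            rw [hgval, hw1, sgl_apply, sgl_apply, if_neg hvu, if_pos rfl]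
            decide
          · have hfv : f v ≠ 0 := by
              intro hfv0
              apply hv
              rw [hgval, hfv0, sgl_apply, sgl_apply, if_neg hvu, if_neg hvw]
              decide
            exact Finset.mem_erase.mpr ⟨hvu, by
              simp only [Finset.mem_filter, Finset.mem_univ, true_and]; exact hfv⟩
      have hucard : u ∈ Finset.univ.filter (fun v => f v ≠ 0) := by
        simp only [Finset.mem_filter, Finset.mem_univ, true_and]; exact hu
      have hcard' : (Finset.univ.filter (fun v => g v ≠ 0)).card ≤ n := by
        have h1 := Finset.card_le_card hsub
        rw [Finset.card_erase_of_mem hucard] at h1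
        omega
      have hgr := ih g hcard' hgker
      have hfg : f = g + (sgl u + sgl w) := by
        funext v
        show f v = (f v + (sgl u v + sgl w v)) + (sgl u v + sgl w v)
        have hz : ∀ x y : ZMod 2, (x + y) + y = x := by decide
        exact (hz _ _).symm
      rw [hfg]
      exact add_mem hgr hδ

lemma smap_surj (ω : G.edgeSet → ZMod 2) (g : Quot (rel G ω) → ZMod 2) :
    ∃ f, Smap (rel G ω) f = g := by
  choose rep hrep using fun c : Quot (rel G ω) => Quot.exists_rep c
  refine ⟨fun v => if rep (Quot.mk (rel G ω) v) = v then g (Quot.mk (rel G ω) v) else 0, ?_⟩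
  funext c
  rw [Smap_apply]
  have hcg : ∀ v ∈ Finset.univ.filter (fun v => Quot.mk (rel G ω) v = c),
      (if rep (Quot.mk (rel G ω) v) = v then g (Quot.mk (rel G ω) v) else 0)
      = (if rep c = v then g c else 0) := by
    intro v hv
    rw [(Finset.mem_filter.mp hv).2]
  have hmem : rep c ∈ Finset.univ.filter (fun v => Quot.mk (rel G ω) v = c) :=
    Finset.mem_filter.mpr ⟨Finset.mem_univ _, hrep c⟩
  rw [Finset.sum_congr rfl hcg, Finset.sum_ite_eq _ (rep c) (fun _ => g c), if_pos hmem]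

lemma card_hom {M N : Type*} [AddGroup M] [AddGroup N] (f : M →+ N) :
    Nat.card M = Nat.card f.ker * Nat.card f.range := by
  rw [AddSubgroup.card_eq_card_quotient_mul_card_addSubgroup f.ker,
    Nat.card_congr (QuotientAddGroup.quotientKerEquivRange f).toEquiv, mul_comm]

lemma card_count (ω : G.edgeSet → ZMod 2) :
    {σ : G.edgeSet → ZMod 2 | IsEvenConf σ ∧ ∀ e, σ e = 1 → ω e = 1}.ncard *
      2 ^ (Fintype.card V)
    = 2 ^ (Finset.univ.filter fun e : G.edgeSet => ω e = 1).card *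
      2 ^ (Nat.card (Quot (rel G ω))) := by
  haveI : Finite (Quot (rel G ω)) :=
    Finite.of_surjective (Quot.mk (rel G ω)) (fun c => Quot.exists_rep c)
  have h1 := card_hom (Tmap G.edgeSet ω)
  have h2 := card_hom (Smap (rel G ω))
  have hrange_top : (Smap (rel G ω)).range = ⊤ := by
    rw [AddSubgroup.eq_top_iff']
    intro g
    obtain ⟨f, hf⟩ := smap_surj ω g
    exact ⟨f, hf⟩
  have hrs : Nat.card (Smap (rel G ω)).range = 2 ^ (Nat.card (Quot (rel G ω))) := by
    rw [hrange_top, Nat.card_congr AddSubgroup.topEquiv.toEquiv, Nat.card_fun, Nat.card_zmod]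
  have hTS : (Tmap G.edgeSet ω).range = (Smap (rel G ω)).ker := by
    apply le_antisymm
    · rintro f hf
      exact AddMonoidHom.mem_ker.mpr (smap_ker_zero ω hf)
    · intro f hf
      exact ker_le_range ω f (AddMonoidHom.mem_ker.mp hf)
  have hdomT : Nat.card ({e : G.edgeSet // ω e = 1} → ZMod 2)
      = 2 ^ (Finset.univ.filter fun e : G.edgeSet => ω e = 1).card := by
    rw [Nat.card_fun, Nat.card_zmod, Nat.card_eq_fintype_card, Fintype.card_subtype]
  have hdomS : Nat.card (V → ZMod 2) = 2 ^ (Fintype.card V) := by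
    rw [Nat.card_fun, Nat.card_zmod, Nat.card_eq_fintype_card]
  have hncard : {σ : G.edgeSet → ZMod 2 | IsEvenConf σ ∧ ∀ e, σ e = 1 → ω e = 1}.ncard
      = Nat.card (Tmap G.edgeSet ω).ker := by
    rw [← Nat.card_coe_set_eq]
    exact Nat.card_congr (kerEquiv ω).symm
  rw [hncard, ← hdomS, h2, hrs, ← hTS, ← mul_assoc, ← h1, hdomT]

end RCUEG2

variable {V : Type} [Fintype V] [DecidableEq V] (G : SimpleGraph V) [Fintype G.edgeSet]

namespace RCUEG3
open RCUEG RCUEG2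

lemma even_zero : IsEvenConf (fun _ : G.edgeSet => (0 : ZMod 2)) := by
  intro v
  rw [srcAt]
  have h : {e : G.edgeSet | (0 : ZMod 2) = 1 ∧ v ∈ (e : Sym2 V)} = ∅ := by
    ext e
    simp only [Set.mem_setOf_eq, Set.mem_empty_iff_false, iff_false, not_and]
    intro h0
    exact absurd h0 (by decide)
  rw [h, Set.ncard_empty, Nat.cast_zero]

lemma ncard_pos' (ω : G.edgeSet → ZMod 2) :
    0 < {σ : G.edgeSet → ZMod 2 | IsEvenConf σ ∧ ∀ e, σ e = 1 → ω e = 1}.ncard := by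
  rw [Set.ncard_pos (Set.toFinite _)]
  refine ⟨fun _ => 0, even_zero G, fun e h => ?_⟩
  have h01 : (0 : ZMod 2) ≠ 1 := by decide
  exact absurd h h01

lemma ncard_cast_sum (ω : G.edgeSet → ZMod 2) :
    (({σ : G.edgeSet → ZMod 2 | IsEvenConf σ ∧ ∀ e, σ e = 1 → ω e = 1}.ncard : ℕ) : ℝ)
    = ∑ σ : G.edgeSet → ZMod 2,
        (if IsEvenConf σ ∧ (∀ e, σ e = 1 → ω e = 1) then (1 : ℝ) else 0) := by
  rw [Set.ncard_eq_toFinset_card', Set.toFinset_setOf, Finset.card_filter]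
  push_cast
  rfl

variable {G}

lemma prod_ite_eq (ω : G.edgeSet → ZMod 2) (c d : ℝ) :
    (∏ e : G.edgeSet, (if ω e = 1 then c else d))
    = c ^ openCount G ω * d ^ (Fintype.card G.edgeSet - openCount G ω) := by
  rw [Finset.prod_ite, Finset.prod_const, Finset.prod_const]
  have hc : (Finset.univ.filter (fun e : G.edgeSet => ¬ ω e = 1)).card
      = Fintype.card G.edgeSet - openCount G ω := by
    have h := Finset.card_filter_add_card_filter_not
      (s := (Finset.univ : Finset G.edgeSet)) (p := fun e => ω e = 1)
    rw [Finset.card_univ] at h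
    unfold openCount
    omega
  rw [hc]
  rfl

lemma sum_ge (η : G.edgeSet → ZMod 2) (c d : ℝ) :
    (∑ ω : G.edgeSet → ZMod 2, if (∀ e, η e = 1 → ω e = 1) then
        c ^ openCount G ω * d ^ (Fintype.card G.edgeSet - openCount G ω) else 0)
    = c ^ openCount G η * (c + d) ^ (Fintype.card G.edgeSet - openCount G η) := by
  set g : G.edgeSet → ZMod 2 → ℝ :=
    fun e v => if (η e = 1 ∧ v ≠ 1) then 0 else (if v = 1 then c else d) with hgdef
  have h1 : ∀ ω : G.edgeSet → ZMod 2, (∏ e : G.edgeSet, g e (ω e))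
      = if (∀ e, η e = 1 → ω e = 1) then
          c ^ openCount G ω * d ^ (Fintype.card G.edgeSet - openCount G ω) else 0 := by
    intro ω
    by_cases hle : ∀ e, η e = 1 → ω e = 1
    · rw [if_pos hle, ← prod_ite_eq ω c d]
      refine Finset.prod_congr rfl fun e _ => ?_
      show (if (η e = 1 ∧ ω e ≠ 1) then (0 : ℝ) else (if ω e = 1 then c else d))
        = if ω e = 1 then c else d
      rw [if_neg (fun h => h.2 (hle e h.1))]
    · rw [if_neg hle]
      push_neg at hle
      obtain ⟨e0, he1, hne1⟩ := hle
      refine Finset.prod_eq_zero (Finset.mem_univ e0) ?_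
      show (if (η e0 = 1 ∧ ω e0 ≠ 1) then (0 : ℝ) else (if ω e0 = 1 then c else d)) = 0
      rw [if_pos ⟨he1, hne1⟩]
  have h3 : ∀ e : G.edgeSet, (∑ v : ZMod 2, g e v) = (if η e = 1 then c else c + d) := by
    intro e
    have h2 : (Finset.univ : Finset (ZMod 2)) = {0, 1} := by decide
    rw [h2, Finset.sum_pair (by decide : (0 : ZMod 2) ≠ 1)]
    show (if (η e = 1 ∧ (0 : ZMod 2) ≠ 1) then (0 : ℝ) else (if (0 : ZMod 2) = 1 then c else d))
      + (if (η e = 1 ∧ (1 : ZMod 2) ≠ 1) then (0 : ℝ) else (if (1 : ZMod 2) = 1 then c else d))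
      = if η e = 1 then c else c + d
    by_cases hh : η e = 1
    · rw [if_pos hh, if_pos ⟨hh, by decide⟩, if_neg (fun h => h.2 rfl), if_pos rfl, zero_add]
    · rw [if_neg hh, if_neg (fun h => hh h.1), if_neg (by decide : ¬ (0 : ZMod 2) = 1),
        if_neg (fun h => hh h.1), if_pos rfl]
      ring
  calc (∑ ω : G.edgeSet → ZMod 2, if (∀ e, η e = 1 → ω e = 1) then
          c ^ openCount G ω * d ^ (Fintype.card G.edgeSet - openCount G ω) else 0)
      = ∑ ω : G.edgeSet → ZMod 2, ∏ e : G.edgeSet, g e (ω e) :=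
        (Finset.sum_congr rfl fun ω _ => (h1 ω).symm)
    _ = ∏ e : G.edgeSet, ∑ v : ZMod 2, g e v := by
        rw [Finset.prod_univ_sum (fun _ => Finset.univ) g, Fintype.piFinset_univ]
    _ = ∏ e : G.edgeSet, (if η e = 1 then c else c + d) := Finset.prod_congr rfl fun e _ => h3 e
    _ = c ^ openCount G η * (c + d) ^ (Fintype.card G.edgeSet - openCount G η) :=
        prod_ite_eq η c (c + d)

end RCUEG3

/-- Sampling a configuration from the free random-cluster measure and then
a uniform even subgraph of it yields the loop O(1) measure with `x = p/(2-p)`. -/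
theorem rc_then_ueg_is_loop {V : Type} [Fintype V] [DecidableEq V]
    (G : SimpleGraph V) [Fintype G.edgeSet]
    (p : ℝ) (hp : p ∈ Set.Ioo (0 : ℝ) 1) (x : ℝ) (hx : x = p / (2 - p))
    (η : G.edgeSet → ZMod 2) (hη : IsEvenConf η) :
    ∑ ω : G.edgeSet → ZMod 2, rcPMF G p Eq ω * uegCondPMF G ω η = loopPMF G x η := by
  classical
  obtain ⟨hp0, hp1⟩ := hp
  set m := Fintype.card G.edgeSet with hm
  set n := Fintype.card V with hn
  have h2p : (0 : ℝ) < 2 - p := by linarith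
  have hcd : (0 : ℝ) < 1 - p / 2 := by linarith
  have hxcd : x * (1 - p / 2) = p / 2 := by rw [hx]; field_simp
  have hx0 : 0 < x := by rw [hx]; exact div_pos hp0 h2p
  -- the even-subgraph count
  set N : (G.edgeSet → ZMod 2) → ℕ := fun ω =>
    {σ : G.edgeSet → ZMod 2 | IsEvenConf σ ∧ ∀ e, σ e = 1 → ω e = 1}.ncard with hN
  have hNpos : ∀ ω, 0 < N ω := fun ω => RCUEG3.ncard_pos' G ω
  have hNcast : ∀ ω : G.edgeSet → ZMod 2,
      (N ω : ℝ) * 2 ^ n = 2 ^ openCount G ω * 2 ^ clusterCount G Eq ω := by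
    intro ω
    have hnat : N ω * 2 ^ n = 2 ^ openCount G ω * 2 ^ clusterCount G Eq ω :=
      RCUEG2.card_count ω
    exact_mod_cast hnat
  -- the random-cluster weight rewritten via the even-subgraph count
  have hw : ∀ ω : G.edgeSet → ZMod 2, rcWeight G p Eq ω
      = 2 ^ n * (N ω : ℝ) * ((p / 2) ^ openCount G ω * (1 - p) ^ (m - openCount G ω)) := by
    intro ω
    unfold rcWeight
    have hcast := hNcast ω
    have h2o : ((2 : ℝ)) ^ openCount G ω ≠ 0 := by positivity
    rw [div_pow]
    rw [show (2 : ℝ) ^ n * (N ω : ℝ) * (p ^ openCount G ω / 2 ^ openCount G ω *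
        (1 - p) ^ (m - openCount G ω)) = ((N ω : ℝ) * 2 ^ n) * p ^ openCount G ω *
        (1 - p) ^ (m - openCount G ω) / 2 ^ openCount G ω by ring]
    rw [hcast]
    field_simp
    ring
  have hpow : ∀ k : ℕ, k ≤ m → (p / 2) ^ k * (1 - p / 2) ^ (m - k) = x ^ k * (1 - p / 2) ^ m := by
    intro k hk
    have hpk : (p / 2) ^ k = x ^ k * (1 - p / 2) ^ k := by rw [← mul_pow, hxcd]
    rw [hpk, mul_assoc, ← pow_add, Nat.add_sub_cancel' hk]
  have hole : ∀ ω : G.edgeSet → ZMod 2, openCount G ω ≤ m := fun ω => by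
    rw [hm, ← Finset.card_univ]; exact Finset.card_filter_le _ _
  set B := ∑ η' : G.edgeSet → ZMod 2,
    (if IsEvenConf η' then x ^ openCount G η' else 0) with hB
  have hBpos : 0 < B := by
    refine Finset.sum_pos' (fun σ _ => ?_) ⟨fun _ => 0, Finset.mem_univ _, ?_⟩
    · by_cases h : IsEvenConf σ
      · rw [if_pos h]; positivity
      · rw [if_neg h]
    · rw [if_pos (RCUEG3.even_zero G)]; positivity
  -- the partition function
  set Z := ∑ ω' : G.edgeSet → ZMod 2, rcWeight G p Eq ω' with hZ
  have hZeq : Z = 2 ^ n * ((1 - p / 2) ^ m * B) := by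
    rw [hZ]
    rw [Finset.sum_congr rfl fun ω _ => hw ω]
    have hstep : ∀ ω : G.edgeSet → ZMod 2, 2 ^ n * (N ω : ℝ) *
        ((p / 2) ^ openCount G ω * (1 - p) ^ (m - openCount G ω))
        = 2 ^ n * ∑ σ : G.edgeSet → ZMod 2,
          (if IsEvenConf σ then (if (∀ e, σ e = 1 → ω e = 1) then
            (p / 2) ^ openCount G ω * (1 - p) ^ (m - openCount G ω) else 0) else 0) := by
      intro ω
      have hNω : ((N ω : ℕ) : ℝ) = ∑ σ : G.edgeSet → ZMod 2,
          (if IsEvenConf σ ∧ (∀ e, σ e = 1 → ω e = 1) then (1 : ℝ) else 0) :=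
        RCUEG3.ncard_cast_sum G ω
      rw [hNω]
      calc 2 ^ n * (∑ σ : G.edgeSet → ZMod 2,
            (if IsEvenConf σ ∧ (∀ e, σ e = 1 → ω e = 1) then (1 : ℝ) else 0)) *
            ((p / 2) ^ openCount G ω * (1 - p) ^ (m - openCount G ω))
          = 2 ^ n * ∑ σ : G.edgeSet → ZMod 2,
            ((if IsEvenConf σ ∧ (∀ e, σ e = 1 → ω e = 1) then (1 : ℝ) else 0) *
              ((p / 2) ^ openCount G ω * (1 - p) ^ (m - openCount G ω))) := by
            rw [← Finset.sum_mul]; ring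
        _ = _ := by
            refine congrArg _ (Finset.sum_congr rfl fun σ _ => ?_)
            by_cases h1 : IsEvenConf σ
            · by_cases h2 : ∀ e, σ e = 1 → ω e = 1
              · rw [if_pos ⟨h1, h2⟩, if_pos h1, if_pos h2, one_mul]
              · rw [if_neg (fun h => h2 h.2), if_pos h1, if_neg h2, zero_mul]
            · rw [if_neg (fun h => h1 h.1), if_neg h1, zero_mul]
    rw [Finset.sum_congr rfl fun ω _ => hstep ω, ← Finset.mul_sum, Finset.sum_comm]
    have hinner : ∀ σ : G.edgeSet → ZMod 2, (∑ ω : G.edgeSet → ZMod 2,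
        (if IsEvenConf σ then (if (∀ e, σ e = 1 → ω e = 1) then
          (p / 2) ^ openCount G ω * (1 - p) ^ (m - openCount G ω) else 0) else 0))
        = (if IsEvenConf σ then x ^ openCount G σ else 0) * (1 - p / 2) ^ m := by
      intro σ
      by_cases h1 : IsEvenConf σ
      · rw [Finset.sum_congr rfl fun ω _ => if_pos h1, if_pos h1]
        rw [RCUEG3.sum_ge σ (p / 2) (1 - p)]
        rw [show p / 2 + (1 - p) = 1 - p / 2 by ring]
        rw [hpow _ (hole σ)]
      · rw [Finset.sum_congr rfl fun ω _ => if_neg h1, if_neg h1, Finset.sum_const,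
          smul_zero, zero_mul]
    rw [Finset.sum_congr rfl fun σ _ => hinner σ, ← Finset.sum_mul, ← hB]
    ring
  have hZpos : 0 < Z := by
    rw [hZeq]
    positivity
  -- the summand
  have hterm : ∀ ω : G.edgeSet → ZMod 2, rcPMF G p Eq ω * uegCondPMF G ω η
      = (if (∀ e, η e = 1 → ω e = 1) then
          2 ^ n * ((p / 2) ^ openCount G ω * (1 - p) ^ (m - openCount G ω)) else 0) / Z := by
    intro ω
    unfold rcPMF uegCondPMF
    have hNω : (({σ : G.edgeSet → ZMod 2 | IsEvenConf σ ∧ ∀ e, σ e = 1 → ω e = 1}.ncard : ℕ) : ℝ)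
        = ((N ω : ℕ) : ℝ) := rfl
    rw [← hZ, hNω]
    by_cases hle : ∀ e, η e = 1 → ω e = 1
    · rw [if_pos ⟨hη, hle⟩, if_pos hle, hw ω]
      have hN0 : (N ω : ℝ) ≠ 0 := by
        have := hNpos ω
        positivity
      field_simp
    · rw [if_neg (fun h => hle h.2), if_neg hle, mul_zero, zero_div]
  rw [Finset.sum_congr rfl fun ω _ => hterm ω, ← Finset.sum_div]
  have hnum : (∑ ω : G.edgeSet → ZMod 2, if (∀ e, η e = 1 → ω e = 1) then
      2 ^ n * ((p / 2) ^ openCount G ω * (1 - p) ^ (m - openCount G ω)) else 0)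
      = 2 ^ n * (x ^ openCount G η * (1 - p / 2) ^ m) := by
    have hpull : ∀ ω : G.edgeSet → ZMod 2, (if (∀ e, η e = 1 → ω e = 1) then
        2 ^ n * ((p / 2) ^ openCount G ω * (1 - p) ^ (m - openCount G ω)) else 0)
        = 2 ^ n * (if (∀ e, η e = 1 → ω e = 1) then
          (p / 2) ^ openCount G ω * (1 - p) ^ (m - openCount G ω) else 0) := by
      intro ω
      by_cases h : ∀ e, η e = 1 → ω e = 1
      · rw [if_pos h, if_pos h]
      · rw [if_neg h, if_neg h, mul_zero]
    rw [Finset.sum_congr rfl fun ω _ => hpull ω, ← Finset.mul_sum,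
      RCUEG3.sum_ge η (p / 2) (1 - p), show p / 2 + (1 - p) = 1 - p / 2 by ring,
      hpow _ (hole η)]
  rw [hnum, hZeq]
  unfold loopPMF
  rw [if_pos hη, ← hB]
  have h2n : ((2 : ℝ)) ^ n ≠ 0 := by positivity
  have hcdm : ((1 : ℝ) - p / 2) ^ m ≠ 0 := by positivity
  field_simp
end
end

section
/- Let G=(V,E) be a finite graph, let x ∈ (0,1), and set p = 2x/(1+x). If η and ζ are independent random configurations with η distributed according to the loop O(1) measure ℓ^0_{x,G} and ζ distributed according to Bernoulli bond percolation P_{x,G}, then the pointwise maximum η ∨ ζ (union of the open edge sets) is distributed according to the free random-cluster measure φ^0_{p,G}. -/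
open MeasureTheory

noncomputable section

attribute [local instance] Classical.propDecidable
set_option maxHeartbeats 1000000
set_option linter.unusedSectionVars false
set_option linter.unreachableTactic false
set_option linter.unusedTactic false


variable {V : Type} [Fintype V] [DecidableEq V] (G : SimpleGraph V) [Fintype G.edgeSet]

namespace LoopRC

lemma zmod2_cases (z : ZMod 2) : z = 0 ∨ z = 1 := by revert z; decide

lemma zmod2_add_self (z : ZMod 2) : z + z = 0 := by revert z; decide

lemma sym2_surj {α : Type*} (z : Sym2 α) : ∃ a b, z = s(a, b) :=
  Sym2.ind (fun a b => ⟨a, b, rfl⟩) z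

lemma sum_zmod2 {M : Type*} [AddCommMonoid M] (f : ZMod 2 → M) :
    ∑ z : ZMod 2, f z = f 0 + f 1 := by
  rw [show (Finset.univ : Finset (ZMod 2)) = {0, 1} from by decide]
  rw [Finset.sum_insert (by decide), Finset.sum_singleton]

lemma prod_ite_weight (a b : ℝ) (ζ : G.edgeSet → ZMod 2) :
    (∏ e : G.edgeSet, if ζ e = 1 then a else b)
      = a ^ openCount G ζ * b ^ (Fintype.card G.edgeSet - openCount G ζ) := by
  rw [Finset.prod_ite, Finset.prod_const, Finset.prod_const]
  have h := Finset.card_filter_add_card_filter_not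
    (s := (Finset.univ : Finset G.edgeSet)) (p := fun e => ζ e = 1)
  rw [Finset.card_univ] at h
  have : (Finset.univ.filter fun e : G.edgeSet => ¬ ζ e = 1).card
      = Fintype.card G.edgeSet - openCount G ζ := by
    unfold openCount; omega
  rw [this]; rfl

lemma sum_pi_ite {ι : Type*} [Fintype ι] [DecidableEq ι] {β : Type*} [Fintype β]
    (P : ι → β → Prop) (f : ι → β → ℝ)
    [inst1 : ∀ ζ : ι → β, Decidable (∀ i, P i (ζ i))] [inst2 : ∀ i, DecidablePred (P i)] :
    (∑ ζ : ι → β, if ∀ i, P i (ζ i) then ∏ i, f i (ζ i) else 0)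
      = ∏ i, ∑ b ∈ Finset.univ.filter (fun b => P i b), f i b := by
  have h1 : ∀ ζ : ι → β, (if ∀ i, P i (ζ i) then ∏ i, f i (ζ i) else 0)
      = ∏ i, (if P i (ζ i) then f i (ζ i) else 0) := by
    intro ζ
    by_cases h : ∀ i, P i (ζ i)
    · rw [if_pos h]; exact Finset.prod_congr rfl fun i _ => (if_pos (h i)).symm
    · rw [if_neg h]
      push_neg at h
      obtain ⟨i, hi⟩ := h
      exact (Finset.prod_eq_zero (Finset.mem_univ i)
        (if_neg hi : (if P i (ζ i) then f i (ζ i) else (0:ℝ)) = 0)).symm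
  simp_rw [h1]
  calc (∑ ζ : ι → β, ∏ i, (if P i (ζ i) then f i (ζ i) else 0))
      = ∑ ζ ∈ Fintype.piFinset (fun _ : ι => (Finset.univ : Finset β)),
          ∏ i, (if P i (ζ i) then f i (ζ i) else 0) := by rw [Fintype.piFinset_univ]
    _ = ∏ i, ∑ b : β, (if P i b then f i b else 0) :=
        (Finset.prod_univ_sum (fun _ : ι => (Finset.univ : Finset β))
          (fun i b => if P i b then f i b else 0)).symm
    _ = ∏ i, ∑ b ∈ Finset.univ.filter (fun b => P i b), f i b := by
        simp_rw [Finset.sum_filter]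


/-- The mod-2 boundary homomorphism. -/
def bnd : (G.edgeSet → ZMod 2) →+ (V → ZMod 2) where
  toFun η := fun v => ∑ e ∈ Finset.univ.filter (fun e : G.edgeSet => v ∈ (e : Sym2 V)), η e
  map_zero' := by funext v; simp
  map_add' η η' := by funext v; simp [Finset.sum_add_distrib]

lemma srcAt_eq (η : G.edgeSet → ZMod 2) (v : V) : srcAt η v = bnd G η v := by
  have h1 : ∀ z : ZMod 2, z = if z = 1 then 1 else 0 := by decide
  have h2 : bnd G η v
      = ((((Finset.univ.filter (fun e : G.edgeSet => v ∈ (e : Sym2 V))).filter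
          (fun e => η e = 1)).card : ℕ) : ZMod 2) := by
    show (∑ e ∈ Finset.univ.filter (fun e : G.edgeSet => v ∈ (e : Sym2 V)), η e) = _
    rw [Finset.sum_congr rfl (fun e _ => h1 (η e))]
    exact Finset.sum_boole _ _
  rw [h2, srcAt, Finset.filter_filter]
  congr 1
  have : {e : G.edgeSet | η e = 1 ∧ v ∈ (e : Sym2 V)}
      = ↑(Finset.univ.filter (fun e : G.edgeSet => v ∈ (e : Sym2 V) ∧ η e = 1)) := by
    ext e; simp [and_comm]
  rw [this, Set.ncard_coe_finset]

lemma isEvenConf_iff (η : G.edgeSet → ZMod 2) : IsEvenConf η ↔ bnd G η = 0 := by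
  constructor
  · intro h; funext v; rw [← srcAt_eq]; exact h v
  · intro h v; rw [srcAt_eq, h]; rfl

variable (ω : G.edgeSet → ZMod 2)

/-- The connectivity relation of the open edges of `ω` (free boundary conditions). -/
def rel : V → V → Prop := fun a b =>
  a = b ∨ ∃ h : G.Adj a b, ω ⟨s(a, b), (G.mem_edgeSet).mpr h⟩ = 1

lemma clusterCount_eq : clusterCount G Eq ω = Nat.card (Quot (rel G ω)) := rfl

/-- Summing over the classes of `rel`. -/
def qmap : (V → ZMod 2) →+ (Quot (rel G ω) → ZMod 2) where
  toFun s := fun c => ∑ v ∈ Finset.univ.filter (fun v => Quot.mk (rel G ω) v = c), s v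
  map_zero' := by funext c; simp
  map_add' s s' := by funext c; simp [Finset.sum_add_distrib]

/-- Configurations supported on the open edges of `ω`. -/
def DSub : AddSubgroup (G.edgeSet → ZMod 2) where
  carrier := {η | ∀ e, ω e = 0 → η e = 0}
  zero_mem' := fun e _ => rfl
  add_mem' := fun ha hb e he => by
    rw [Pi.add_apply, ha e he, hb e he, add_zero]
  neg_mem' := fun ha e he => by
    rw [Pi.neg_apply, ha e he, neg_zero]

def fmap : (DSub G ω) →+ (V → ZMod 2) := (bnd G).comp (DSub G ω).subtype

lemma qmap_bnd (η : G.edgeSet → ZMod 2) (hη : ∀ e, ω e = 0 → η e = 0) :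
    qmap G ω (bnd G η) = 0 := by
  funext c
  show (∑ v ∈ Finset.univ.filter (fun v => Quot.mk (rel G ω) v = c),
    ∑ e ∈ Finset.univ.filter (fun e : G.edgeSet => v ∈ (e : Sym2 V)), η e) = 0
  have hswap : ∀ v, (∑ e ∈ Finset.univ.filter (fun e : G.edgeSet => v ∈ (e : Sym2 V)), η e)
      = ∑ e : G.edgeSet, if v ∈ (e : Sym2 V) then η e else 0 := by
    intro v; rw [Finset.sum_filter]
  rw [Finset.sum_congr rfl (fun v _ => hswap v), Finset.sum_comm]
  apply Finset.sum_eq_zero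
  intro e _
  rcases zmod2_cases (η e) with h0 | h1
  · simp [h0]
  · have hωe : ω e = 1 := by
      rcases zmod2_cases (ω e) with h | h
      · exact absurd (hη e h) (by rw [h1]; decide)
      · exact h
    obtain ⟨a, b, hab⟩ := sym2_surj (e : Sym2 V)
    have hadj : G.Adj a b := G.mem_edgeSet.mp (hab ▸ e.2)
    have hne : a ≠ b := hadj.ne
    have hmem : ∀ v : V, v ∈ (e : Sym2 V) ↔ v = a ∨ v = b := by
      intro v; rw [hab, Sym2.mem_iff]
    have hrel : rel G ω a b := by
      refine Or.inr ⟨hadj, ?_⟩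
      have : (⟨s(a, b), (G.mem_edgeSet).mpr hadj⟩ : G.edgeSet) = e := (Subtype.ext hab).symm
      rw [this, hωe]
    have hmk : Quot.mk (rel G ω) a = Quot.mk (rel G ω) b := Quot.sound hrel
    have hcount : (∑ v ∈ Finset.univ.filter (fun v => Quot.mk (rel G ω) v = c),
        if v ∈ (e : Sym2 V) then η e else 0)
        = ((Finset.univ.filter (fun v => Quot.mk (rel G ω) v = c)).filter
            (fun v => v ∈ (e : Sym2 V))).card • η e := by
      rw [← Finset.sum_filter, Finset.sum_const]
    rw [hcount]
    by_cases hc : Quot.mk (rel G ω) a = c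
    · have : (Finset.univ.filter (fun v => Quot.mk (rel G ω) v = c)).filter
          (fun v => v ∈ (e : Sym2 V)) = {a, b} := by
        ext v
        simp only [Finset.mem_filter, Finset.mem_univ, true_and, hmem v,
          Finset.mem_insert, Finset.mem_singleton]
        constructor
        · exact fun h => h.2
        · rintro (rfl | rfl)
          · exact ⟨hc, Or.inl rfl⟩
          · exact ⟨hmk ▸ hc, Or.inr rfl⟩
      rw [this, Finset.card_insert_of_notMem (by simpa using hne), Finset.card_singleton]
      rw [two_nsmul, zmod2_add_self]
    · have : (Finset.univ.filter (fun v => Quot.mk (rel G ω) v = c)).filter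
          (fun v => v ∈ (e : Sym2 V)) = ∅ := by
        ext v
        simp only [Finset.mem_filter, Finset.mem_univ, true_and, hmem v,
          Finset.notMem_empty, iff_false, not_and]
        rintro hvc (rfl | rfl)
        · exact hc hvc
        · exact hc (hmk.trans hvc)
      rw [this, Finset.card_empty, zero_smul]


def pairInd (a b : V) : V → ZMod 2 :=
  fun v => (if v = a then 1 else 0) + (if v = b then 1 else 0)

lemma pairInd_self (a : V) : pairInd a a = 0 := by
  funext v
  show (if v = a then (1:ZMod 2) else 0) + (if v = a then 1 else 0) = 0
  exact zmod2_add_self _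

lemma pairInd_comm (a b : V) : pairInd a b = pairInd b a := by
  funext v; exact add_comm _ _

lemma pairInd_trans (a b c : V) : pairInd a c = pairInd a b + pairInd b c := by
  funext v
  show _ = ((if v = a then (1:ZMod 2) else 0) + (if v = b then 1 else 0))
    + ((if v = b then 1 else 0) + (if v = c then 1 else 0))
  have h : ∀ u w z : ZMod 2, (u + w) + (w + z) = u + z := by decide
  rw [h]; rfl

lemma pair_mem_range {a b : V} (hmk : Quot.mk (rel G ω) a = Quot.mk (rel G ω) b) :
    pairInd a b ∈ (fmap G ω).range := by
  have heg : Relation.EqvGen (rel G ω) a b := Quot.eq.mp hmk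
  clear hmk
  induction heg with
  | rel a b hr =>
    rcases hr with rfl | ⟨hadj, hopen⟩
    · rw [pairInd_self]; exact zero_mem _
    · set e₀ : G.edgeSet := ⟨s(a, b), (G.mem_edgeSet).mpr hadj⟩ with he₀
      set η₀ : G.edgeSet → ZMod 2 := fun e => if e = e₀ then 1 else 0 with hη₀
      have hD : η₀ ∈ DSub G ω := by
        intro e he
        show (if e = e₀ then (1:ZMod 2) else 0) = 0
        rw [if_neg]
        intro hcon
        rw [hcon, hopen] at he
        exact one_ne_zero he
      refine ⟨⟨η₀, hD⟩, ?_⟩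
      funext v
      show (∑ e ∈ Finset.univ.filter (fun e : G.edgeSet => v ∈ (e : Sym2 V)),
        if e = e₀ then (1:ZMod 2) else 0) = pairInd a b v
      rw [Finset.sum_ite_eq' _ e₀ (fun _ => (1:ZMod 2))]
      have hne : a ≠ b := hadj.ne
      have hmem : e₀ ∈ Finset.univ.filter (fun e : G.edgeSet => v ∈ (e : Sym2 V))
          ↔ (v = a ∨ v = b) := by
        simp only [Finset.mem_filter, Finset.mem_univ, true_and, he₀, Sym2.mem_iff]
      by_cases hva : v = a
      · rw [if_pos (hmem.mpr (Or.inl hva))]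
        show _ = (if v = a then (1:ZMod 2) else 0) + (if v = b then 1 else 0)
        rw [if_pos hva, if_neg (by rw [hva]; exact hne), add_zero]
      · by_cases hvb : v = b
        · rw [if_pos (hmem.mpr (Or.inr hvb))]
          show _ = (if v = a then (1:ZMod 2) else 0) + (if v = b then 1 else 0)
          rw [if_pos hvb, if_neg hva, zero_add]
        · rw [if_neg (fun h => (hmem.mp h).elim hva hvb)]
          show _ = (if v = a then (1:ZMod 2) else 0) + (if v = b then 1 else 0)
          rw [if_neg hva, if_neg hvb, add_zero]
  | refl a => rw [pairInd_self]; exact zero_mem _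
  | symm a b _ ih => rw [pairInd_comm]; exact ih
  | trans a b c _ _ ih1 ih2 => rw [pairInd_trans a b c]; exact add_mem ih1 ih2

lemma range_le_ker (s : V → ZMod 2) (hs : s ∈ (fmap G ω).range) : qmap G ω s = 0 := by
  obtain ⟨d, rfl⟩ := hs
  exact qmap_bnd G ω d.1 d.2

lemma ker_le_range : ∀ n (s : V → ZMod 2), qmap G ω s = 0 →
    (Finset.univ.filter (fun v => s v = 1)).card = n → s ∈ (fmap G ω).range := by
  intro n
  induction n using Nat.strong_induction_on with
  | _ n ih =>
    intro s hs hcard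
    by_cases hsupp : ∀ v, ¬ s v = 1
    · have : s = 0 := funext fun v => (zmod2_cases (s v)).resolve_right (hsupp v)
      rw [this]; exact zero_mem _
    · push_neg at hsupp
      obtain ⟨a, ha⟩ := hsupp
      set c := Quot.mk (rel G ω) a with hc
      set A := Finset.univ.filter (fun v => Quot.mk (rel G ω) v = c) with hA
      have hamem : a ∈ A := by simp [hA, hc]
      have hsum : (∑ v ∈ A, s v) = 0 := congrFun hs c
      rw [← Finset.add_sum_erase _ _ hamem, ha] at hsum
      have herase : (∑ v ∈ A.erase a, s v) = 1 := by
        have : ∀ t : ZMod 2, 1 + t = 0 → t = 1 := by decide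
        exact this _ hsum
      have hb : ∃ b ∈ A.erase a, s b = 1 := by
        by_contra h
        push_neg at h
        have hz : (∑ v ∈ A.erase a, s v) = 0 :=
          Finset.sum_eq_zero fun v hv => (zmod2_cases (s v)).resolve_right (h v hv)
        rw [hz] at herase
        exact zero_ne_one herase
      obtain ⟨b, hbmem, hsb⟩ := hb
      have hba : b ≠ a := Finset.ne_of_mem_erase hbmem
      have hmkb : Quot.mk (rel G ω) b = c := by
        have := Finset.mem_of_mem_erase hbmem
        rw [hA] at this
        exact (Finset.mem_filter.mp this).2
      have hmkab : Quot.mk (rel G ω) a = Quot.mk (rel G ω) b := hc ▸ hmkb.symm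
      have hpair : pairInd a b ∈ (fmap G ω).range := pair_mem_range G ω hmkab
      set s' := s + pairInd a b with hs'
      have hq' : qmap G ω s' = 0 := by
        rw [hs', map_add, hs, zero_add]
        exact range_le_ker G ω _ hpair
      have hval : ∀ v, s' v = if v = a ∨ v = b then s v + 1 else s v := by
        intro v
        show s v + ((if v = a then (1:ZMod 2) else 0) + (if v = b then 1 else 0)) = _
        by_cases hva : v = a
        · rw [if_pos hva, if_neg (hva ▸ fun h => hba h.symm), add_zero, if_pos (Or.inl hva)]
        · by_cases hvb : v = b
          · rw [if_pos hvb, if_neg hva, zero_add, if_pos (Or.inr hvb)]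
          · rw [if_neg hva, if_neg hvb, add_zero, if_neg (fun h => h.elim hva hvb), add_zero]
      have hsupp' : Finset.univ.filter (fun v => s' v = 1)
          = ((Finset.univ.filter (fun v => s v = 1)).erase a).erase b := by
        ext v
        simp only [Finset.mem_filter, Finset.mem_univ, true_and, Finset.mem_erase]
        rw [hval v]
        by_cases hva : v = a
        · subst hva
          rw [if_pos (Or.inl rfl), ha]
          simp [zmod2_add_self]
        · by_cases hvb : v = b
          · subst hvb
            rw [if_pos (Or.inr rfl), hsb]
            simp [zmod2_add_self, hba]
          · rw [if_neg (fun h => h.elim hva hvb)]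
            simp [hva, hvb]
      have hbmem' : b ∈ (Finset.univ.filter (fun v => s v = 1)).erase a := by
        simp [Finset.mem_erase, hba, hsb]
      have hamem' : a ∈ Finset.univ.filter (fun v => s v = 1) := by simp [ha]
      have hcard' : (Finset.univ.filter (fun v => s' v = 1)).card = n - 1 - 1 := by
        rw [hsupp', Finset.card_erase_of_mem hbmem', Finset.card_erase_of_mem hamem', hcard]
      have hpos : 0 < n := by
        rw [← hcard]
        exact Finset.card_pos.mpr ⟨a, hamem'⟩
      have hlt : n - 1 - 1 < n := by omega
      have hs'range : s' ∈ (fmap G ω).range := ih _ hlt s' hq' hcard'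
      have : s = s' + pairInd a b := by
        funext v
        rw [hs']
        show s v = (s v + pairInd a b v) + pairInd a b v
        have : ∀ u w : ZMod 2, (u + w) + w = u := by decide
        rw [this]
      rw [this]
      exact add_mem hs'range hpair


/-- The number of even subconfigurations of `ω`. -/
def evenCount : ℕ :=
  (Finset.univ.filter
    (fun η : G.edgeSet → ZMod 2 => IsEvenConf η ∧ ∀ e, ω e = 0 → η e = 0)).card

lemma card_DSub : Nat.card (DSub G ω) = 2 ^ openCount G ω := by
  have eqv : DSub G ω ≃ ({e : G.edgeSet // ω e = 1} → ZMod 2) :=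
    { toFun := fun d => fun e => d.1 e.1
      invFun := fun g => ⟨fun e => if h : ω e = 1 then g ⟨e, h⟩ else 0, fun e he => by
        show (if h : ω e = 1 then g ⟨e, h⟩ else 0) = 0
        rw [dif_neg]; intro h; rw [h] at he; exact one_ne_zero he⟩
      left_inv := fun d => by
        apply Subtype.ext; funext e
        show (if h : ω e = 1 then d.1 e else 0) = d.1 e
        by_cases h : ω e = 1
        · rw [dif_pos h]
        · rw [dif_neg h]
          exact (d.2 e ((zmod2_cases (ω e)).resolve_right h)).symm
      right_inv := fun g => by
        funext e
        show (if h : ω e.1 = 1 then g ⟨e.1, h⟩ else 0) = g e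
        rw [dif_pos e.2] }
  rw [Nat.card_congr eqv, Nat.card_fun, Nat.card_zmod, Nat.card_eq_fintype_card,
    Fintype.card_subtype]
  rfl

lemma card_ker_fmap : Nat.card (fmap G ω).ker = evenCount G ω := by
  have eqv : (fmap G ω).ker
      ≃ {η : G.edgeSet → ZMod 2 // IsEvenConf η ∧ ∀ e, ω e = 0 → η e = 0} :=
    { toFun := fun k => ⟨k.1.1,
        ⟨(isEvenConf_iff G k.1.1).mpr (AddMonoidHom.mem_ker.mp k.2), k.1.2⟩⟩
      invFun := fun h => ⟨⟨h.1, h.2.2⟩, AddMonoidHom.mem_ker.mpr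
        ((isEvenConf_iff G h.1).mp h.2.1)⟩
      left_inv := fun k => rfl
      right_inv := fun h => rfl }
  rw [Nat.card_congr eqv, Nat.card_eq_fintype_card, Fintype.card_subtype]
  rfl

lemma qmap_surj : Function.Surjective (qmap G ω) := by
  intro t
  refine ⟨fun v => if v = (Quot.mk (rel G ω) v).out then t (Quot.mk (rel G ω) v) else 0, ?_⟩
  funext c
  show (∑ v ∈ Finset.univ.filter (fun v => Quot.mk (rel G ω) v = c),
    (if v = (Quot.mk (rel G ω) v).out then t (Quot.mk (rel G ω) v) else 0)) = t c
  have hcong : ∀ v ∈ Finset.univ.filter (fun v => Quot.mk (rel G ω) v = c),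
      (if v = (Quot.mk (rel G ω) v).out then t (Quot.mk (rel G ω) v) else 0)
        = (if v = c.out then t c else 0) := by
    intro v hv
    rw [(Finset.mem_filter.mp hv).2]
  rw [Finset.sum_congr rfl hcong, Finset.sum_ite_eq' _ c.out (fun _ => t c), if_pos]
  simp [Quot.out_eq]

lemma card_even_mul :
    evenCount G ω * 2 ^ Fintype.card V = 2 ^ openCount G ω * 2 ^ clusterCount G Eq ω := by
  have h1 : Nat.card (DSub G ω)
      = Nat.card ((DSub G ω) ⧸ (fmap G ω).ker) * Nat.card (fmap G ω).ker :=
    AddSubgroup.card_eq_card_quotient_mul_card_addSubgroup _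
  have h2 : Nat.card ((DSub G ω) ⧸ (fmap G ω).ker) = Nat.card (fmap G ω).range :=
    Nat.card_congr (QuotientAddGroup.quotientKerEquivRange (fmap G ω)).toEquiv
  have h3 : Nat.card (V → ZMod 2)
      = Nat.card ((V → ZMod 2) ⧸ (qmap G ω).ker) * Nat.card (qmap G ω).ker :=
    AddSubgroup.card_eq_card_quotient_mul_card_addSubgroup _
  have h4 : Nat.card ((V → ZMod 2) ⧸ (qmap G ω).ker) = Nat.card (Quot (rel G ω) → ZMod 2) :=
    Nat.card_congr (QuotientAddGroup.quotientKerEquivOfSurjective _ (qmap_surj G ω)).toEquiv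
  have h5 : (fmap G ω).range = (qmap G ω).ker := by
    ext s
    constructor
    · intro hs
      exact AddMonoidHom.mem_ker.mpr (range_le_ker G ω s hs)
    · intro hs
      exact ker_le_range G ω _ s (AddMonoidHom.mem_ker.mp hs) rfl
  have hV : Nat.card (V → ZMod 2) = 2 ^ Fintype.card V := by
    rw [Nat.card_fun, Nat.card_zmod, Nat.card_eq_fintype_card]
  have hQ : Nat.card (Quot (rel G ω) → ZMod 2) = 2 ^ clusterCount G Eq ω := by
    rw [Nat.card_fun, Nat.card_zmod, clusterCount_eq]
  have hD := card_DSub G ω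
  have hker := card_ker_fmap G ω
  rw [h2] at h1
  rw [h4, ← h5] at h3
  calc evenCount G ω * 2 ^ Fintype.card V
      = Nat.card (fmap G ω).ker * Nat.card (V → ZMod 2) := by rw [hker, hV]
    _ = Nat.card (fmap G ω).ker
        * (Nat.card (Quot (rel G ω) → ZMod 2) * Nat.card (fmap G ω).range) := by rw [h3]
    _ = (Nat.card (fmap G ω).range * Nat.card (fmap G ω).ker)
        * Nat.card (Quot (rel G ω) → ZMod 2) := by ring
    _ = Nat.card (DSub G ω) * Nat.card (Quot (rel G ω) → ZMod 2) := by rw [← h1]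
    _ = 2 ^ openCount G ω * 2 ^ clusterCount G Eq ω := by rw [hD, hQ]

end LoopRC


namespace LoopRC

variable {V : Type} [Fintype V] [DecidableEq V] (G : SimpleGraph V) [Fintype G.edgeSet]
variable (x : ℝ) (ω : G.edgeSet → ZMod 2)

lemma edge_sum (η : G.edgeSet → ZMod 2) (e : G.edgeSet) :
    (∑ b ∈ Finset.univ.filter
        (fun b : ZMod 2 => (if η e = 1 ∨ b = 1 then (1 : ZMod 2) else 0) = ω e),
      (if b = 1 then x else 1 - x))
    = (if ω e = 1 then (if η e = 1 then 1 else x) else (if η e = 1 then 0 else 1 - x)) := by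
  rw [Finset.sum_filter, sum_zmod2]
  rcases zmod2_cases (η e) with h | h <;> rcases zmod2_cases (ω e) with h' | h' <;>
    simp [h, h'] <;> ring


lemma key_zeta (η : G.edgeSet → ZMod 2) :
    (∑ ζ : G.edgeSet → ZMod 2, if unionConf G η ζ = ω then berPMF G x ζ else 0)
    = ∏ e : G.edgeSet,
        (if ω e = 1 then (if η e = 1 then 1 else x) else (if η e = 1 then 0 else 1 - x)) := by
  have hcond : ∀ ζ : G.edgeSet → ZMod 2, (unionConf G η ζ = ω)
      ↔ ∀ e, ((if η e = 1 ∨ ζ e = 1 then (1 : ZMod 2) else 0) = ω e) := by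
    intro ζ
    rw [funext_iff]
    rfl
  have hber : ∀ ζ, berPMF G x ζ = ∏ e : G.edgeSet, (if ζ e = 1 then x else 1 - x) :=
    fun ζ => (prod_ite_weight G x (1 - x) ζ).symm
  have step1 : (∑ ζ : G.edgeSet → ZMod 2, if unionConf G η ζ = ω then berPMF G x ζ else 0)
      = ∑ ζ : G.edgeSet → ZMod 2,
          if (∀ e, ((if η e = 1 ∨ ζ e = 1 then (1 : ZMod 2) else 0) = ω e))
          then ∏ e : G.edgeSet, (if ζ e = 1 then x else 1 - x) else 0 := by
    refine Finset.sum_congr rfl fun ζ _ => ?_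
    rw [hber ζ]
    by_cases h : unionConf G η ζ = ω
    · rw [if_pos h, if_pos ((hcond ζ).mp h)]
    · rw [if_neg h, if_neg (fun hh => h ((hcond ζ).mpr hh))]
  refine step1.trans (Eq.trans (sum_pi_ite (fun (e : G.edgeSet) (b : ZMod 2) =>
      (if η e = 1 ∨ b = 1 then (1 : ZMod 2) else 0) = ω e)
      (fun _ b => if b = 1 then x else 1 - x)) ?_)
  exact Finset.prod_congr rfl fun e _ => edge_sum G x ω η e


lemma prod_combined (η : G.edgeSet → ZMod 2) :
    (∏ e : G.edgeSet, ((if η e = 1 then x else 1)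
        * (if ω e = 1 then (if η e = 1 then 1 else x) else (if η e = 1 then 0 else 1 - x))))
    = (if (∀ e, ω e = 0 → η e = 0)
        then x ^ openCount G ω * (1 - x) ^ (Fintype.card G.edgeSet - openCount G ω) else 0) := by
  by_cases hsub : ∀ e, ω e = 0 → η e = 0
  · rw [if_pos hsub, ← prod_ite_weight]
    refine Finset.prod_congr rfl fun e _ => ?_
    rcases zmod2_cases (η e) with h | h <;> rcases zmod2_cases (ω e) with h' | h'
    · simp [h, h']
    · simp [h, h']
    · exact absurd (hsub e h') (by rw [h]; decide)
    · simp [h, h']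
  · rw [if_neg hsub]
    push_neg at hsub
    obtain ⟨e, he, hne⟩ := hsub
    refine Finset.prod_eq_zero (Finset.mem_univ e) ?_
    have h1 : η e = 1 := (zmod2_cases _).resolve_left hne
    rw [h1, he]
    simp

lemma numer_eq :
    (∑ η : G.edgeSet → ZMod 2, ∑ ζ : G.edgeSet → ZMod 2,
      if unionConf G η ζ = ω
      then (if IsEvenConf η then x ^ openCount G η else 0) * berPMF G x ζ else 0)
    = (evenCount G ω : ℝ)
      * (x ^ openCount G ω * (1 - x) ^ (Fintype.card G.edgeSet - openCount G ω)) := by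
  calc (∑ η : G.edgeSet → ZMod 2, ∑ ζ : G.edgeSet → ZMod 2,
      if unionConf G η ζ = ω
      then (if IsEvenConf η then x ^ openCount G η else 0) * berPMF G x ζ else 0)
      = ∑ η : G.edgeSet → ZMod 2, (if IsEvenConf η then x ^ openCount G η else 0)
          * ∑ ζ : G.edgeSet → ZMod 2, (if unionConf G η ζ = ω then berPMF G x ζ else 0) := by
        refine Finset.sum_congr rfl fun η _ => ?_
        rw [Finset.mul_sum]
        refine Finset.sum_congr rfl fun ζ _ => ?_
        by_cases h : unionConf G η ζ = ω
        · rw [if_pos h, if_pos h]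
        · rw [if_neg h, if_neg h, mul_zero]
    _ = ∑ η : G.edgeSet → ZMod 2,
          (if IsEvenConf η ∧ (∀ e, ω e = 0 → η e = 0)
            then x ^ openCount G ω * (1 - x) ^ (Fintype.card G.edgeSet - openCount G ω)
            else 0) := by
        refine Finset.sum_congr rfl fun η _ => ?_
        rw [key_zeta G x ω η]
        by_cases he : IsEvenConf η
        · rw [if_pos he]
          have hx' : x ^ openCount G η = ∏ e : G.edgeSet, (if η e = 1 then x else 1) := by
            rw [prod_ite_weight, one_pow, mul_one]
          rw [hx', ← Finset.prod_mul_distrib, prod_combined G x ω η]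
          by_cases hs : ∀ e, ω e = 0 → η e = 0
          · rw [if_pos hs, if_pos ⟨he, hs⟩]
          · rw [if_neg hs, if_neg (fun hc => hs hc.2)]
        · rw [if_neg he, if_neg (fun hc => he hc.1), zero_mul]
    _ = _ := by
        rw [Finset.sum_ite, Finset.sum_const, Finset.sum_const_zero, add_zero, nsmul_eq_mul]
        rfl

lemma rcWeight_eq (hx : x ∈ Set.Ioo (0 : ℝ) 1) (p : ℝ) (hp : p = 2 * x / (1 + x)) :
    rcWeight G p Eq ω = (2 ^ Fintype.card V / (1 + x) ^ Fintype.card G.edgeSet)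
      * ((evenCount G ω : ℝ)
        * (x ^ openCount G ω * (1 - x) ^ (Fintype.card G.edgeSet - openCount G ω))) := by
  obtain ⟨hx0, hx1⟩ := hx
  have h1x : (0 : ℝ) < 1 + x := by linarith
  have hEkey : (evenCount G ω : ℝ) * 2 ^ Fintype.card V
      = 2 ^ openCount G ω * 2 ^ clusterCount G Eq ω := by
    exact_mod_cast congrArg (Nat.cast : ℕ → ℝ) (card_even_mul G ω)
  have hle : openCount G ω ≤ Fintype.card G.edgeSet := by
    have := Finset.card_filter_le (Finset.univ : Finset G.edgeSet) (fun e => ω e = 1)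
    rwa [Finset.card_univ] at this
  have hsplit : ((1 : ℝ) + x) ^ Fintype.card G.edgeSet
      = (1 + x) ^ openCount G ω * (1 + x) ^ (Fintype.card G.edgeSet - openCount G ω) := by
    rw [← pow_add, Nat.add_sub_cancel' hle]
  have hp' : 1 - p = (1 - x) / (1 + x) := by
    rw [hp]; field_simp; ring
  have e1 : (2 * x / (1 + x)) ^ openCount G ω
        * ((1 - x) / (1 + x)) ^ (Fintype.card G.edgeSet - openCount G ω)
        * 2 ^ clusterCount G Eq ω
      = ((2 : ℝ) ^ openCount G ω * 2 ^ clusterCount G Eq ω)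
        * (x ^ openCount G ω * (1 - x) ^ (Fintype.card G.edgeSet - openCount G ω))
        / (1 + x) ^ Fintype.card G.edgeSet := by
    rw [hsplit, div_pow, div_pow, mul_pow]
    field_simp
  rw [rcWeight, hp', hp, e1, ← hEkey]
  field_simp

end LoopRC

/-- The union of an independent loop O(1) sample (parameter `x`) and a
Bernoulli(x) sample is distributed as the free random-cluster measure with `p = 2x/(1+x)`. -/
theorem loop_union_bernoulli_is_rc {V : Type} [Fintype V] [DecidableEq V]
    (G : SimpleGraph V) [Fintype G.edgeSet]
    (x : ℝ) (hx : x ∈ Set.Ioo (0 : ℝ) 1) (p : ℝ) (hp : p = 2 * x / (1 + x))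
    (ω : G.edgeSet → ZMod 2) :
    ∑ η : G.edgeSet → ZMod 2, ∑ ζ : G.edgeSet → ZMod 2,
        (if unionConf G η ζ = ω then loopPMF G x η * berPMF G x ζ else 0)
      = rcPMF G p Eq ω := by
  have hx0 := hx.1
  have hx1 := hx.2
  have h1x : (0 : ℝ) < 1 + x := by linarith
  have hLHS : (∑ η : G.edgeSet → ZMod 2, ∑ ζ : G.edgeSet → ZMod 2,
        (if unionConf G η ζ = ω then loopPMF G x η * berPMF G x ζ else 0))
      = (∑ η : G.edgeSet → ZMod 2, ∑ ζ : G.edgeSet → ZMod 2,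
          (if unionConf G η ζ = ω
            then (if IsEvenConf η then x ^ openCount G η else 0) * berPMF G x ζ else 0))
        / (∑ η' : G.edgeSet → ZMod 2,
            if IsEvenConf η' then x ^ openCount G η' else 0) := by
    rw [Finset.sum_div]
    refine Finset.sum_congr rfl fun η _ => ?_
    rw [Finset.sum_div]
    refine Finset.sum_congr rfl fun ζ _ => ?_
    by_cases h : unionConf G η ζ = ω
    · rw [if_pos h, if_pos h, loopPMF, div_mul_eq_mul_div]
    · rw [if_neg h, if_neg h, zero_div]
  have hber1 : (∑ ζ : G.edgeSet → ZMod 2, berPMF G x ζ) = 1 := by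
    have hprod : ∀ ζ : G.edgeSet → ZMod 2,
        berPMF G x ζ = ∏ e : G.edgeSet, (if ζ e = 1 then x else 1 - x) :=
      fun ζ => (LoopRC.prod_ite_weight G x (1 - x) ζ).symm
    rw [Finset.sum_congr rfl fun ζ _ => hprod ζ]
    calc (∑ ζ : G.edgeSet → ZMod 2, ∏ e : G.edgeSet, (if ζ e = 1 then x else 1 - x))
        = ∑ ζ ∈ Fintype.piFinset (fun _ : G.edgeSet => (Finset.univ : Finset (ZMod 2))),
            ∏ e : G.edgeSet, (if ζ e = 1 then x else 1 - x) := by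
          rw [Fintype.piFinset_univ]
      _ = ∏ e : G.edgeSet, ∑ b : ZMod 2, (if b = 1 then x else 1 - x) :=
          (Finset.prod_univ_sum (fun _ : G.edgeSet => (Finset.univ : Finset (ZMod 2)))
            (fun _ b => if b = 1 then x else 1 - x)).symm
      _ = ∏ _e : G.edgeSet, (1 : ℝ) := Finset.prod_congr rfl (fun e _ => by
          rw [LoopRC.sum_zmod2]
          norm_num)
      _ = 1 := Finset.prod_const_one
  have hZ : (∑ ω' : G.edgeSet → ZMod 2, (LoopRC.evenCount G ω' : ℝ)
        * (x ^ openCount G ω' * (1 - x) ^ (Fintype.card G.edgeSet - openCount G ω')))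
      = ∑ η' : G.edgeSet → ZMod 2,
          if IsEvenConf η' then x ^ openCount G η' else 0 := by
    rw [← Finset.sum_congr rfl fun ω' (_ : ω' ∈ Finset.univ) => LoopRC.numer_eq G x ω']
    rw [Finset.sum_comm]
    refine Finset.sum_congr rfl fun η _ => ?_
    rw [Finset.sum_comm]
    have hpt : ∀ ζ : G.edgeSet → ZMod 2, (∑ ω' : G.edgeSet → ZMod 2,
        if unionConf G η ζ = ω'
        then (if IsEvenConf η then x ^ openCount G η else 0) * berPMF G x ζ else 0)
        = (if IsEvenConf η then x ^ openCount G η else 0) * berPMF G x ζ := by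
      intro ζ
      rw [Finset.sum_ite_eq Finset.univ (unionConf G η ζ)
        (fun _ => (if IsEvenConf η then x ^ openCount G η else 0) * berPMF G x ζ),
        if_pos (Finset.mem_univ _)]
    rw [Finset.sum_congr rfl fun ζ _ => hpt ζ, ← Finset.mul_sum, hber1, mul_one]
  have hRC : ∀ ω' : G.edgeSet → ZMod 2, rcWeight G p Eq ω'
      = (2 ^ Fintype.card V / (1 + x) ^ Fintype.card G.edgeSet)
        * ((LoopRC.evenCount G ω' : ℝ)
          * (x ^ openCount G ω' * (1 - x) ^ (Fintype.card G.edgeSet - openCount G ω'))) :=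
    fun ω' => LoopRC.rcWeight_eq G x ω' hx p hp
  have hc : (2 : ℝ) ^ Fintype.card V / (1 + x) ^ Fintype.card G.edgeSet ≠ 0 := by
    positivity
  rw [hLHS, rcPMF, hRC ω, Finset.sum_congr rfl fun ω' (_ : ω' ∈ Finset.univ) => hRC ω',
    ← Finset.mul_sum, mul_div_mul_left _ _ hc, hZ, LoopRC.numer_eq G x ω]
end
end

section
/- Let G=(V,E) be a finite graph and β > 0. A current is an element n ∈ ℕ^E; its sources are the vertices v at which the sum of n_e over edges e incident to v is odd, and its weight is w_β(n) = Π_{e∈E} β^{n_e}/n_e!. The sourceless random current measure is the probability measure on sourceless currents proportional to w_β, and the traced sourceless random current 𝐏_{β,G} is its pushforward to configurations under n ↦ (indicator of n_e > 0)_{e∈E}. If η and ζ are independent random configurations with η distributed according to the loop O(1) measure ℓ^0_{x,G} for x = tanh(β) and ζ distributed according to Bernoulli bond percolation P_{q,G} with q = 1 − 1/cosh(β), then the pointwise maximum η ∨ ζ (union of the open edge sets) is distributed according to 𝐏_{β,G}. -/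
open MeasureTheory

noncomputable section

attribute [local instance] Classical.propDecidable

variable {V : Type} [Fintype V] [DecidableEq V] (G : SimpleGraph V) [Fintype G.edgeSet]

/-- The weight `w_β(n) = ∏_e β^{n_e}/n_e!` of a current. -/
def curWeight (β : ℝ) (n : G.edgeSet → ℕ) : ℝ :=
  ∏ e : G.edgeSet, β ^ n e / (Nat.factorial (n e) : ℝ)

/-- A current is sourceless: at every vertex the sum of the current over incident edges
is even. -/
def Sourceless (n : G.edgeSet → ℕ) : Prop :=
  ∀ v : V, Even (∑ e : G.edgeSet, if v ∈ (e : Sym2 V) then n e else 0)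

/-- The trace of a current: the configuration of its positive edges. -/
def traceCur (n : G.edgeSet → ℕ) : G.edgeSet → ZMod 2 :=
  fun e => if n e = 0 then 0 else 1

/-- The traced sourceless random current measure `𝐏_{β,G}` as a probability mass function. -/
def tracedCurrentPMF (β : ℝ) (ω : G.edgeSet → ZMod 2) : ℝ :=
  (∑' n : {n : G.edgeSet → ℕ // Sourceless G n ∧ traceCur G n = ω}, curWeight G β n.1) /
    ∑' n : {n : G.edgeSet → ℕ // Sourceless G n}, curWeight G β n.1

namespace RC13

lemma zmod2_cases : ∀ a : ZMod 2, a = 0 ∨ a = 1 := by decide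

def edgeWt (β : ℝ) (k : ℕ) : ℝ := β ^ k / (Nat.factorial k : ℝ)

lemma edgeWt_nonneg {β : ℝ} (hβ : 0 ≤ β) (k : ℕ) : 0 ≤ edgeWt β k :=
  div_nonneg (pow_nonneg hβ _) (Nat.cast_nonneg _)

lemma hasSum_edgeWt (β : ℝ) : HasSum (edgeWt β) (Real.exp β) := by
  have h := NormedSpace.expSeries_div_hasSum_exp β
  rwa [← Real.exp_eq_exp_ℝ] at h

lemma cast_eq_zero_iff (k : ℕ) : (k : ZMod 2) = 0 ↔ Even k := by
  rw [ZMod.natCast_eq_zero_iff]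
  exact (even_iff_two_dvd).symm

lemma cast_eq_one_iff (k : ℕ) : (k : ZMod 2) = 1 ↔ Odd k := by
  rw [← Nat.not_even_iff_odd, ← cast_eq_zero_iff]
  rcases zmod2_cases (k : ZMod 2) with h | h <;>
    simp [h, (by decide : ¬(0 : ZMod 2) = 1), (by decide : ¬(1 : ZMod 2) = 0)]

lemma hasSum_even (β : ℝ) :
    HasSum (fun k : ℕ => if (k : ZMod 2) = 0 then edgeWt β k else 0) (Real.cosh β) := by
  have h := ((hasSum_edgeWt β).add (hasSum_edgeWt (-β))).div_const 2
  rw [Real.cosh_eq]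
  have e : (fun k : ℕ => if (k : ZMod 2) = 0 then edgeWt β k else 0)
      = fun k : ℕ => (edgeWt β k + edgeWt (-β) k) / 2 := by
    funext k
    rcases Nat.even_or_odd k with hk | hk
    · rw [if_pos ((cast_eq_zero_iff k).2 hk)]
      simp only [edgeWt, hk.neg_pow]
      ring
    · rw [if_neg (by rw [cast_eq_zero_iff]; exact Nat.not_even_iff_odd.mpr hk)]
      simp only [edgeWt, hk.neg_pow]
      ring
  rw [e]; exact h

lemma hasSum_odd (β : ℝ) :
    HasSum (fun k : ℕ => if (k : ZMod 2) = 1 then edgeWt β k else 0) (Real.sinh β) := by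
  have h := ((hasSum_edgeWt β).sub (hasSum_edgeWt (-β))).div_const 2
  rw [Real.sinh_eq]
  have e : (fun k : ℕ => if (k : ZMod 2) = 1 then edgeWt β k else 0)
      = fun k : ℕ => (edgeWt β k - edgeWt (-β) k) / 2 := by
    funext k
    rcases Nat.even_or_odd k with hk | hk
    · rw [if_neg (by rw [cast_eq_one_iff]; exact (Nat.not_odd_iff_even).mpr hk)]
      simp only [edgeWt, hk.neg_pow]
      ring
    · rw [if_pos ((cast_eq_one_iff k).2 hk)]
      simp only [edgeWt, hk.neg_pow]
      ring
  rw [e]; exact h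

lemma hasSum_evenPos (β : ℝ) :
    HasSum (fun k : ℕ => if ((k : ZMod 2) = 0 ∧ k ≠ 0) then edgeWt β k else 0)
      (Real.cosh β - 1) := by
  have h := (hasSum_even β).sub (hasSum_ite_eq (0 : ℕ) (1 : ℝ))
  have e : (fun k : ℕ =>
      (if (k : ZMod 2) = 0 then edgeWt β k else 0) - (if k = 0 then 1 else 0))
      = fun k : ℕ => if ((k : ZMod 2) = 0 ∧ k ≠ 0) then edgeWt β k else 0 := by
    funext k
    by_cases hk : k = 0
    · subst hk; simp [edgeWt]
    · by_cases hp : (k : ZMod 2) = 0 <;> simp [hk, hp]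
  rw [← e]; exact h



def traceN (k : ℕ) : ZMod 2 := if k = 0 then 0 else 1

def Fwt (β : ℝ) (w h : ZMod 2) : ℝ :=
  if w = 1 then (if h = 1 then Real.sinh β else Real.cosh β - 1)
  else (if h = 1 then 0 else 1)

lemma hasSum_Fwt (β : ℝ) (w h : ZMod 2) :
    HasSum (fun k : ℕ => if (traceN k = w ∧ (k : ZMod 2) = h) then edgeWt β k else 0)
      (Fwt β w h) := by
  rcases zmod2_cases w with hw | hw <;> rcases zmod2_cases h with hh | hh <;>
    subst hw <;> subst hh
  · -- w = 0, h = 0 : only k = 0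
    have e : (fun k : ℕ => if (traceN k = 0 ∧ (k : ZMod 2) = 0) then edgeWt β k else 0)
        = fun k : ℕ => if k = 0 then (1 : ℝ) else 0 := by
      funext k
      by_cases hk : k = 0
      · subst hk; simp [traceN, edgeWt]
      · rw [if_neg hk, if_neg]
        rintro ⟨h1, -⟩
        rw [traceN, if_neg hk] at h1
        exact (by decide : ¬(1 : ZMod 2) = 0) h1
    rw [e, show Fwt β 0 0 = 1 by simp [Fwt, (by decide : ¬(0 : ZMod 2) = 1)]]
    exact hasSum_ite_eq 0 1
  · -- w = 0, h = 1 : impossible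
    have e : (fun k : ℕ => if (traceN k = 0 ∧ (k : ZMod 2) = 1) then edgeWt β k else 0)
        = fun _ : ℕ => (0 : ℝ) := by
      funext k
      rw [if_neg]
      rintro ⟨h1, h2⟩
      by_cases hk : k = 0
      · subst hk
        simp only [Nat.cast_zero] at h2
        exact (by decide : ¬(0 : ZMod 2) = 1) h2
      · rw [traceN, if_neg hk] at h1
        exact (by decide : ¬(1 : ZMod 2) = 0) h1
    rw [e, show Fwt β 0 1 = 0 by simp [Fwt, (by decide : ¬(0 : ZMod 2) = 1)]]
    exact hasSum_zero
  · -- w = 1, h = 0 : even positive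
    have e : (fun k : ℕ => if (traceN k = 1 ∧ (k : ZMod 2) = 0) then edgeWt β k else 0)
        = fun k : ℕ => if ((k : ZMod 2) = 0 ∧ k ≠ 0) then edgeWt β k else 0 := by
      funext k
      by_cases hk : k = 0
      · subst hk
        rw [if_neg, if_neg]
        · rintro ⟨-, h2⟩; exact h2 rfl
        · rintro ⟨h1, -⟩
          rw [traceN, if_pos rfl] at h1
          exact (by decide : ¬(0 : ZMod 2) = 1) h1
      · rw [traceN, if_neg hk]
        simp [hk]
    rw [e, show Fwt β 1 0 = Real.cosh β - 1 by
      simp [Fwt, (by decide : ¬(0 : ZMod 2) = 1)]]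
    exact hasSum_evenPos β
  · -- w = 1, h = 1 : odd
    have e : (fun k : ℕ => if (traceN k = 1 ∧ (k : ZMod 2) = 1) then edgeWt β k else 0)
        = fun k : ℕ => if (k : ZMod 2) = 1 then edgeWt β k else 0 := by
      funext k
      by_cases hk : k = 0
      · subst hk
        rw [if_neg, if_neg]
        · simp only [Nat.cast_zero]; decide
        · rintro ⟨-, h2⟩
          simp only [Nat.cast_zero] at h2
          exact (by decide : ¬(0 : ZMod 2) = 1) h2
      · rw [traceN, if_neg hk]
        simp
    rw [e, show Fwt β 1 1 = Real.sinh β by simp [Fwt]]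
    exact hasSum_odd β

lemma hasSum_Pwt (β : ℝ) (h : ZMod 2) :
    HasSum (fun k : ℕ => if (k : ZMod 2) = h then edgeWt β k else 0)
      (if h = 1 then Real.sinh β else Real.cosh β) := by
  rcases zmod2_cases h with hh | hh <;> subst hh
  · rw [if_neg (by decide : ¬(0 : ZMod 2) = 1)]
    exact hasSum_even β
  · rw [if_pos rfl]
    exact hasSum_odd β

lemma hasSum_pi_fin : ∀ (m : ℕ) (f : Fin m → ℕ → ℝ) (S : Fin m → ℝ),
    (∀ i k, 0 ≤ f i k) → (∀ i, HasSum (f i) (S i)) →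
    HasSum (fun n : Fin m → ℕ => ∏ i, f i (n i)) (∏ i, S i) := by
  intro m
  induction m with
  | zero =>
      intro f S _ _
      have h := hasSum_fintype (fun n : Fin 0 → ℕ => ∏ i, f i (n i))
      simpa using h
  | succ m ih =>
      intro f S hnn hs
      have h0 := hs 0
      have hrest := ih (fun i : Fin m => f i.succ) (fun i : Fin m => S i.succ)
        (fun i k => hnn _ _) (fun i => hs _)
      have hsummable : Summable
          (fun p : ℕ × (Fin m → ℕ) => f 0 p.1 * ∏ i : Fin m, f i.succ (p.2 i)) := by
        apply Summable.mul_of_nonneg h0.summable hrest.summable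
        · exact fun k => hnn 0 k
        · exact fun n => Finset.prod_nonneg fun i _ => hnn _ _
      have hprod : HasSum (fun p : ℕ × (Fin m → ℕ) => f 0 p.1 * ∏ i : Fin m, f i.succ (p.2 i))
          (S 0 * ∏ i : Fin m, S i.succ) := (h0.mul_eq hrest hsummable.hasSum) ▸ hsummable.hasSum
      rw [Fin.prod_univ_succ]
      have hfe : (fun p : ℕ × (Fin m → ℕ) => f 0 p.1 * ∏ i : Fin m, f i.succ (p.2 i))
          = (fun n : Fin (m + 1) → ℕ => ∏ i, f i (n i)) ∘ (Fin.consEquiv (fun _ : Fin (m + 1) => ℕ)) := by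
        funext p
        simp [Fin.consEquiv, Fin.prod_univ_succ]
      rw [hfe] at hprod
      exact ((Fin.consEquiv (fun _ : Fin (m + 1) => ℕ)).hasSum_iff).mp hprod

lemma hasSum_pi {ι : Type} [Fintype ι] (f : ι → ℕ → ℝ) (S : ι → ℝ)
    (hnn : ∀ i k, 0 ≤ f i k) (hs : ∀ i, HasSum (f i) (S i)) :
    HasSum (fun n : ι → ℕ => ∏ i, f i (n i)) (∏ i, S i) := by
  classical
  let e := Fintype.equivFin ι
  have h := hasSum_pi_fin (Fintype.card ι) (fun j => f (e.symm j)) (fun j => S (e.symm j))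
    (fun _ _ => hnn _ _) (fun j => hs _)
  have h2 := ((Equiv.arrowCongr e (Equiv.refl ℕ)).hasSum_iff).mpr h
  have hfe : ((fun n' : Fin (Fintype.card ι) → ℕ => ∏ j, f (e.symm j) (n' j))
        ∘ (Equiv.arrowCongr e (Equiv.refl ℕ)))
      = fun n : ι → ℕ => ∏ i, f i (n i) := by
    funext n
    simp only [Function.comp_apply, Equiv.arrowCongr_apply, Equiv.coe_refl,
      Function.comp, id_eq]
    exact Equiv.prod_comp e.symm (fun i => f i (n i))
  rw [hfe] at h2
  rwa [Equiv.prod_comp e.symm S] at h2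

end RC13

namespace RC13

section Graph

variable {V : Type} [Fintype V] [DecidableEq V] (G : SimpleGraph V) [Fintype G.edgeSet]

lemma sourceless_iff (n : G.edgeSet → ℕ) :
    Sourceless G n ↔ IsEvenConf (fun e : G.edgeSet => ((n e : ℕ) : ZMod 2)) := by
  unfold Sourceless IsEvenConf srcAt
  apply forall_congr'
  intro v
  rw [show Even (∑ e : G.edgeSet, if v ∈ (e : Sym2 V) then n e else 0)
      ↔ ((∑ e : G.edgeSet, if v ∈ (e : Sym2 V) then n e else 0 : ℕ) : ZMod 2) = 0 from
    (cast_eq_zero_iff _).symm]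
  have h1 : ((∑ e : G.edgeSet, if v ∈ (e : Sym2 V) then n e else 0 : ℕ) : ZMod 2)
      = ∑ e : G.edgeSet,
          (if ((n e : ℕ) : ZMod 2) = 1 ∧ v ∈ (e : Sym2 V) then 1 else 0) := by
    push_cast
    apply Finset.sum_congr rfl
    intro e _
    by_cases hv : v ∈ (e : Sym2 V)
    · rcases zmod2_cases ((n e : ℕ) : ZMod 2) with h | h <;>
        simp [h, hv, (by decide : ¬(0 : ZMod 2) = 1)]
    · simp [hv]
  have h2 : ((Set.ncard {e : G.edgeSet |
        (fun e : G.edgeSet => ((n e : ℕ) : ZMod 2)) e = 1 ∧ v ∈ (e : Sym2 V)} : ℕ) : ZMod 2)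
      = ∑ e : G.edgeSet,
          (if ((n e : ℕ) : ZMod 2) = 1 ∧ v ∈ (e : Sym2 V) then 1 else 0) := by
    rw [Set.ncard_eq_toFinset_card', Set.toFinset_setOf, Finset.card_filter]
    push_cast
    rfl
  rw [h1, h2]

lemma prod_ite_pow (f : G.edgeSet → ZMod 2) (a b : ℝ) :
    (∏ e : G.edgeSet, if f e = 1 then a else b)
      = a ^ openCount G f * b ^ (Fintype.card G.edgeSet - openCount G f) := by
  rw [Finset.prod_ite, Finset.prod_const, Finset.prod_const]
  have h := Finset.card_filter_add_card_filter_not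
    (s := (Finset.univ : Finset G.edgeSet)) (p := fun e => f e = 1)
  rw [Finset.card_univ] at h
  have h2 : (Finset.univ.filter (fun e : G.edgeSet => ¬ f e = 1)).card
      = Fintype.card G.edgeSet - openCount G f := by
    unfold openCount; omega
  rw [h2]
  rfl

lemma curWeight_eq (β : ℝ) (n : G.edgeSet → ℕ) :
    curWeight G β n = ∏ e : G.edgeSet, edgeWt β (n e) := rfl

lemma tsum_num (β : ℝ) (hβ : 0 < β) (ω : G.edgeSet → ZMod 2) :
    (∑' n : {n : G.edgeSet → ℕ // Sourceless G n ∧ traceCur G n = ω}, curWeight G β n.1)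
      = ∑ η : G.edgeSet → ZMod 2,
          (if IsEvenConf η then ∏ e : G.edgeSet, Fwt β (ω e) (η e) else 0) := by
  have h0 : (∑' n : {n : G.edgeSet → ℕ // Sourceless G n ∧ traceCur G n = ω},
        curWeight G β n.1)
      = ∑' n : G.edgeSet → ℕ,
          Set.indicator {n : G.edgeSet → ℕ | Sourceless G n ∧ traceCur G n = ω}
            (curWeight G β) n :=
    tsum_subtype _ _
  rw [h0]
  have hpt : ∀ n : G.edgeSet → ℕ,
      Set.indicator {n : G.edgeSet → ℕ | Sourceless G n ∧ traceCur G n = ω}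
        (curWeight G β) n
      = ∑ η : G.edgeSet → ZMod 2, (if IsEvenConf η then
          ∏ e : G.edgeSet, (if (traceN (n e) = ω e ∧ ((n e : ℕ) : ZMod 2) = η e)
            then edgeWt β (n e) else 0) else 0) := by
    intro n
    rw [Set.indicator_apply]
    rw [Finset.sum_eq_single (fun e : G.edgeSet => ((n e : ℕ) : ZMod 2))]
    · by_cases hs : Sourceless G n
      · rw [if_pos ((sourceless_iff G n).mp hs)]
        by_cases ht : traceCur G n = ω
        · rw [if_pos (show n ∈ {n : G.edgeSet → ℕ | Sourceless G n ∧ traceCur G n = ω}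
            from ⟨hs, ht⟩)]
          have ht' : ∀ e : G.edgeSet, traceN (n e) = ω e := fun e => congrFun ht e
          rw [curWeight_eq]
          refine Finset.prod_congr rfl fun e _ => ?_
          rw [if_pos ⟨ht' e, rfl⟩]
        · rw [if_neg (show n ∉ {n : G.edgeSet → ℕ | Sourceless G n ∧ traceCur G n = ω}
            from fun hmem => ht hmem.2)]
          obtain ⟨e, he⟩ : ∃ e : G.edgeSet, ¬ traceN (n e) = ω e := by
            by_contra hc
            push_neg at hc
            exact ht (funext hc)
          symm
          apply Finset.prod_eq_zero (Finset.mem_univ e)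
          exact if_neg fun hc => he hc.1
      · rw [if_neg (fun h => hs ((sourceless_iff G n).mpr h)),
          if_neg (show n ∉ {n : G.edgeSet → ℕ | Sourceless G n ∧ traceCur G n = ω}
            from fun hmem => hs hmem.1)]
    · intro η _ hne
      have hz : ∏ e : G.edgeSet, (if (traceN (n e) = ω e ∧ ((n e : ℕ) : ZMod 2) = η e)
          then edgeWt β (n e) else 0) = 0 := by
        obtain ⟨e, he⟩ : ∃ e : G.edgeSet, ¬ ((n e : ℕ) : ZMod 2) = η e := by
          by_contra hc
          push_neg at hc
          exact hne (funext fun e => (hc e).symm)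
        apply Finset.prod_eq_zero (Finset.mem_univ e)
        exact if_neg fun hc => he hc.2
      rw [hz, ite_self]
    · intro h; exact absurd (Finset.mem_univ _) h
  rw [tsum_congr hpt]
  have hsumm : ∀ η : G.edgeSet → ZMod 2, Summable (fun n : G.edgeSet → ℕ =>
      (if IsEvenConf η then ∏ e : G.edgeSet,
        (if (traceN (n e) = ω e ∧ ((n e : ℕ) : ZMod 2) = η e)
          then edgeWt β (n e) else 0) else 0)) := by
    intro η
    by_cases hη : IsEvenConf η
    · simp only [if_pos hη]
      exact (hasSum_pi
        (fun e k => if (traceN k = ω e ∧ (k : ZMod 2) = η e) then edgeWt β k else 0)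
        (fun e => Fwt β (ω e) (η e))
        (fun e k => by split
                       exacts [edgeWt_nonneg hβ.le _, le_rfl])
        (fun e => hasSum_Fwt β (ω e) (η e))).summable
    · simp only [if_neg hη]; exact summable_zero
  rw [Summable.tsum_finsetSum (fun η _ => hsumm η)]
  refine Finset.sum_congr rfl fun η _ => ?_
  by_cases hη : IsEvenConf η
  · simp only [if_pos hη]
    exact (hasSum_pi
      (fun e k => if (traceN k = ω e ∧ (k : ZMod 2) = η e) then edgeWt β k else 0)
      (fun e => Fwt β (ω e) (η e))
      (fun e k => by split
                     exacts [edgeWt_nonneg hβ.le _, le_rfl])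
      (fun e => hasSum_Fwt β (ω e) (η e))).tsum_eq
  · simp only [if_neg hη]; exact tsum_zero

lemma tsum_den (β : ℝ) (hβ : 0 < β) :
    (∑' n : {n : G.edgeSet → ℕ // Sourceless G n}, curWeight G β n.1)
      = ∑ η : G.edgeSet → ZMod 2,
          (if IsEvenConf η then
            ∏ e : G.edgeSet, (if η e = 1 then Real.sinh β else Real.cosh β) else 0) := by
  have h0 : (∑' n : {n : G.edgeSet → ℕ // Sourceless G n}, curWeight G β n.1)
      = ∑' n : G.edgeSet → ℕ,
          Set.indicator {n : G.edgeSet → ℕ | Sourceless G n} (curWeight G β) n :=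
    tsum_subtype _ _
  rw [h0]
  have hpt : ∀ n : G.edgeSet → ℕ,
      Set.indicator {n : G.edgeSet → ℕ | Sourceless G n} (curWeight G β) n
      = ∑ η : G.edgeSet → ZMod 2, (if IsEvenConf η then
          ∏ e : G.edgeSet, (if ((n e : ℕ) : ZMod 2) = η e
            then edgeWt β (n e) else 0) else 0) := by
    intro n
    rw [Set.indicator_apply]
    rw [Finset.sum_eq_single (fun e : G.edgeSet => ((n e : ℕ) : ZMod 2))]
    · by_cases hs : Sourceless G n
      · rw [if_pos ((sourceless_iff G n).mp hs),
          if_pos (show n ∈ {n : G.edgeSet → ℕ | Sourceless G n} from hs), curWeight_eq]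
        refine Finset.prod_congr rfl fun e _ => ?_
        rw [if_pos rfl]
      · rw [if_neg (fun h => hs ((sourceless_iff G n).mpr h)),
          if_neg (show n ∉ {n : G.edgeSet → ℕ | Sourceless G n} from hs)]
    · intro η _ hne
      have hz : ∏ e : G.edgeSet, (if ((n e : ℕ) : ZMod 2) = η e
          then edgeWt β (n e) else 0) = 0 := by
        obtain ⟨e, he⟩ : ∃ e : G.edgeSet, ¬ ((n e : ℕ) : ZMod 2) = η e := by
          by_contra hc
          push_neg at hc
          exact hne (funext fun e => (hc e).symm)
        apply Finset.prod_eq_zero (Finset.mem_univ e)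
        exact if_neg he
      rw [hz, ite_self]
    · intro h; exact absurd (Finset.mem_univ _) h
  rw [tsum_congr hpt]
  have hsumm : ∀ η : G.edgeSet → ZMod 2, Summable (fun n : G.edgeSet → ℕ =>
      (if IsEvenConf η then ∏ e : G.edgeSet,
        (if ((n e : ℕ) : ZMod 2) = η e then edgeWt β (n e) else 0) else 0)) := by
    intro η
    by_cases hη : IsEvenConf η
    · simp only [if_pos hη]
      exact (hasSum_pi
        (fun e k => if ((k : ZMod 2) = η e) then edgeWt β k else 0)
        (fun e => if η e = 1 then Real.sinh β else Real.cosh β)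
        (fun e k => by split
                       exacts [edgeWt_nonneg hβ.le _, le_rfl])
        (fun e => hasSum_Pwt β (η e))).summable
    · simp only [if_neg hη]; exact summable_zero
  rw [Summable.tsum_finsetSum (fun η _ => hsumm η)]
  refine Finset.sum_congr rfl fun η _ => ?_
  by_cases hη : IsEvenConf η
  · simp only [if_pos hη]
    exact (hasSum_pi
      (fun e k => if ((k : ZMod 2) = η e) then edgeWt β k else 0)
      (fun e => if η e = 1 then Real.sinh β else Real.cosh β)
      (fun e k => by split
                     exacts [edgeWt_nonneg hβ.le _, le_rfl])
      (fun e => hasSum_Pwt β (η e))).tsum_eq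
  · simp only [if_neg hη]; exact tsum_zero

end Graph

def Twt (q : ℝ) (h w : ZMod 2) : ℝ :=
  if h = 1 then (if w = 1 then 1 else 0) else (if w = 1 then q else 1 - q)

lemma sum_zmod2 (f : ZMod 2 → ℝ) : ∑ a : ZMod 2, f a = f 0 + f 1 := by
  have h : (Finset.univ : Finset (ZMod 2)) = {0, 1} := by decide
  rw [h, Finset.sum_insert (by decide), Finset.sum_singleton]

lemma ite_all_prod {κ : Type} [Fintype κ] (P : κ → Prop) (g : κ → ℝ) :
    (if (∀ i, P i) then ∏ i, g i else 0) = ∏ i, if P i then g i else 0 := by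
  by_cases h : ∀ i, P i
  · rw [if_pos h]
    exact Finset.prod_congr rfl fun i _ => (if_pos (h i)).symm
  · rw [if_neg h]
    obtain ⟨i, hi⟩ := not_forall.mp h
    symm
    apply Finset.prod_eq_zero (Finset.mem_univ i)
    exact if_neg hi

end RC13

/-- The union of an independent loop O(1) sample with `x = tanh β` and a
Bernoulli(1 − 1/cosh β) sample is distributed as the traced sourceless random current. -/
theorem loop_union_bernoulli_is_traced_current {V : Type} [Fintype V] [DecidableEq V]
    (G : SimpleGraph V) [Fintype G.edgeSet]
    (β : ℝ) (hβ : 0 < β) (x q : ℝ)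
    (hx : x = Real.tanh β) (hq : q = 1 - 1 / Real.cosh β)
    (ω : G.edgeSet → ZMod 2) :
    ∑ η : G.edgeSet → ZMod 2, ∑ ζ : G.edgeSet → ZMod 2,
        (if unionConf G η ζ = ω then loopPMF G x η * berPMF G q ζ else 0)
      = tracedCurrentPMF G β ω := by
  have hc : (0 : ℝ) < Real.cosh β := Real.cosh_pos β
  have hcne : Real.cosh β ≠ 0 := ne_of_gt hc
  -- Step 1: compute the inner sum over ζ.
  have hinner : ∀ η : G.edgeSet → ZMod 2,
      (∑ ζ : G.edgeSet → ZMod 2,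
        if unionConf G η ζ = ω then loopPMF G x η * berPMF G q ζ else 0)
      = loopPMF G x η * ∏ e : G.edgeSet, RC13.Twt q (η e) (ω e) := by
    intro η
    have step1 : ∀ ζ : G.edgeSet → ZMod 2,
        (if unionConf G η ζ = ω then loopPMF G x η * berPMF G q ζ else 0)
        = loopPMF G x η *
          ∏ e : G.edgeSet, (if (if η e = 1 ∨ ζ e = 1 then (1 : ZMod 2) else 0) = ω e
            then (if ζ e = 1 then q else 1 - q) else 0) := by
      intro ζ
      have hcond : (unionConf G η ζ = ω) ↔
          ∀ e : G.edgeSet, (if η e = 1 ∨ ζ e = 1 then (1 : ZMod 2) else 0) = ω e := by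
        unfold unionConf
        rw [funext_iff]
      have hber : berPMF G q ζ = ∏ e : G.edgeSet, (if ζ e = 1 then q else 1 - q) := by
        rw [RC13.prod_ite_pow G ζ q (1 - q)]
        rfl
      have hsplit : (if unionConf G η ζ = ω then loopPMF G x η * berPMF G q ζ else 0)
          = loopPMF G x η * (if unionConf G η ζ = ω then berPMF G q ζ else 0) := by
        split <;> simp
      rw [hsplit, hber]
      congr 1
      by_cases hu : unionConf G η ζ = ω
      · rw [if_pos hu]
        exact Finset.prod_congr rfl fun e _ => (if_pos (hcond.mp hu e)).symm
      · rw [if_neg hu]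
        obtain ⟨e, he⟩ := not_forall.mp (fun h => hu (hcond.mpr h))
        symm
        apply Finset.prod_eq_zero (Finset.mem_univ e)
        exact if_neg he
    rw [Finset.sum_congr rfl (fun ζ _ => step1 ζ), ← Finset.mul_sum]
    congr 1
    rw [← Fintype.piFinset_univ]
    rw [Finset.sum_prod_piFinset (Finset.univ : Finset (ZMod 2))
      (fun (e : G.edgeSet) (a : ZMod 2) =>
        if (if η e = 1 ∨ a = 1 then (1 : ZMod 2) else 0) = ω e
          then (if a = 1 then q else 1 - q) else 0)]
    refine Finset.prod_congr rfl fun e _ => ?_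
    rw [RC13.sum_zmod2]
    rcases RC13.zmod2_cases (η e) with h | h <;>
      rcases RC13.zmod2_cases (ω e) with h' | h' <;>
      simp [RC13.Twt, h, h', (by decide : ¬(0 : ZMod 2) = 1),
        (by decide : ¬(1 : ZMod 2) = 0)]
  rw [Finset.sum_congr rfl (fun η _ => hinner η)]
  unfold tracedCurrentPMF
  rw [RC13.tsum_num G β hβ ω, RC13.tsum_den G β hβ]
  unfold loopPMF
  -- Step 2: rewrite each term of the η-sum as a single product.
  have hL : ∀ η : G.edgeSet → ZMod 2,
      ((if IsEvenConf η then x ^ openCount G η else 0) /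
        (∑ η' : G.edgeSet → ZMod 2, if IsEvenConf η' then x ^ openCount G η' else 0)) *
        (∏ e : G.edgeSet, RC13.Twt q (η e) (ω e))
      = (if IsEvenConf η then
          ∏ e : G.edgeSet, ((if η e = 1 then x else 1) * RC13.Twt q (η e) (ω e)) else 0) /
        (∑ η' : G.edgeSet → ZMod 2, if IsEvenConf η' then x ^ openCount G η' else 0) := by
    intro η
    by_cases hη : IsEvenConf η
    · rw [if_pos hη, if_pos hη, div_mul_eq_mul_div]
      congr 1
      rw [Finset.prod_mul_distrib, RC13.prod_ite_pow G η x 1, one_pow, mul_one]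
    · rw [if_neg hη, if_neg hη]
      simp
  rw [Finset.sum_congr rfl (fun η _ => hL η), ← Finset.sum_div]
  -- Step 3: per-edge identities relating the current weights to the loop/percolation ones.
  have hFwt : ∀ w h : ZMod 2, RC13.Fwt β w h
      = Real.cosh β * ((if h = 1 then x else 1) * RC13.Twt q h w) := by
    intro w h
    rcases RC13.zmod2_cases w with hw | hw <;> rcases RC13.zmod2_cases h with hh | hh <;>
      subst hw <;> subst hh
    · rw [show RC13.Fwt β 0 0 = 1 by simp [RC13.Fwt, (by decide : ¬(0 : ZMod 2) = 1)],
        show RC13.Twt q 0 0 = 1 - q by simp [RC13.Twt, (by decide : ¬(0 : ZMod 2) = 1)],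
        if_neg (by decide : ¬(0 : ZMod 2) = 1), hq]
      field_simp
      ring
    · rw [show RC13.Fwt β 0 1 = 0 by simp [RC13.Fwt, (by decide : ¬(0 : ZMod 2) = 1)],
        show RC13.Twt q 1 0 = 0 by simp [RC13.Twt, (by decide : ¬(0 : ZMod 2) = 1)]]
      ring
    · rw [show RC13.Fwt β 1 0 = Real.cosh β - 1 by
          simp [RC13.Fwt, (by decide : ¬(0 : ZMod 2) = 1)],
        show RC13.Twt q 0 1 = q by simp [RC13.Twt, (by decide : ¬(0 : ZMod 2) = 1)],
        if_neg (by decide : ¬(0 : ZMod 2) = 1), hq]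
      field_simp
    · rw [show RC13.Fwt β 1 1 = Real.sinh β by simp [RC13.Fwt],
        show RC13.Twt q 1 1 = 1 by simp [RC13.Twt],
        if_pos rfl, hx, Real.tanh_eq_sinh_div_cosh]
      field_simp
  have hPwt : ∀ h : ZMod 2, (if h = 1 then Real.sinh β else Real.cosh β)
      = Real.cosh β * (if h = 1 then x else 1) := by
    intro h
    rcases RC13.zmod2_cases h with hh | hh <;> subst hh
    · simp [(by decide : ¬(0 : ZMod 2) = 1)]
    · simp only [↓reduceIte, hx, Real.tanh_eq_sinh_div_cosh]
      field_simp
  -- Step 4: pull out the factor cosh β per edge on the right-hand side.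
  have hNum : (∑ η : G.edgeSet → ZMod 2,
        if IsEvenConf η then ∏ e : G.edgeSet, RC13.Fwt β (ω e) (η e) else 0)
      = Real.cosh β ^ Fintype.card G.edgeSet *
        ∑ η : G.edgeSet → ZMod 2, (if IsEvenConf η then
          ∏ e : G.edgeSet, ((if η e = 1 then x else 1) * RC13.Twt q (η e) (ω e)) else 0) := by
    rw [Finset.mul_sum]
    refine Finset.sum_congr rfl fun η _ => ?_
    by_cases hη : IsEvenConf η
    · rw [if_pos hη, if_pos hη]
      calc ∏ e : G.edgeSet, RC13.Fwt β (ω e) (η e)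
          = ∏ e : G.edgeSet,
              (Real.cosh β * ((if η e = 1 then x else 1) * RC13.Twt q (η e) (ω e))) :=
            Finset.prod_congr rfl fun e _ => hFwt (ω e) (η e)
        _ = _ := by rw [Finset.prod_mul_distrib, Finset.prod_const, Finset.card_univ]
    · rw [if_neg hη, if_neg hη, mul_zero]
  have hDen : (∑ η : G.edgeSet → ZMod 2,
        if IsEvenConf η then
          ∏ e : G.edgeSet, (if η e = 1 then Real.sinh β else Real.cosh β) else 0)
      = Real.cosh β ^ Fintype.card G.edgeSet *
        ∑ η' : G.edgeSet → ZMod 2, (if IsEvenConf η' then x ^ openCount G η' else 0) := by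
    rw [Finset.mul_sum]
    refine Finset.sum_congr rfl fun η _ => ?_
    by_cases hη : IsEvenConf η
    · rw [if_pos hη, if_pos hη]
      calc ∏ e : G.edgeSet, (if η e = 1 then Real.sinh β else Real.cosh β)
          = ∏ e : G.edgeSet, (Real.cosh β * (if η e = 1 then x else 1)) :=
            Finset.prod_congr rfl fun e _ => hPwt (η e)
        _ = Real.cosh β ^ Fintype.card G.edgeSet *
            ∏ e : G.edgeSet, (if η e = 1 then x else 1) := by
            rw [Finset.prod_mul_distrib, Finset.prod_const, Finset.card_univ]
        _ = Real.cosh β ^ Fintype.card G.edgeSet * x ^ openCount G η := by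
            rw [RC13.prod_ite_pow G η x 1, one_pow, mul_one]
    · rw [if_neg hη, if_neg hη, mul_zero]
  rw [hNum, hDen, mul_div_mul_left _ _ (pow_ne_zero _ hcne)]
end
end
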